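/- arXiv:2009.12989 — 5 statements merged into one kernel-verified Lean document; each statement's English description precedes it below -/
import Mathlib

section
/- Every collection of more than h!·(t-1)^h many h-element subsets of a set contains a t-sunflower, i.e., t sets whose pairwise intersections are all equal to a common set R. -/
lemma sunflower_aux {α : Type*} [DecidableEq α] (t : ℕ) (ht : 2 ≤ t) :
    ∀ h (𝒜 : Finset (Finset α)), (∀ X ∈ 𝒜, X.card = h) →
    Nat.factorial h * (t - 1) ^ h < 𝒜.card →
    ∃ 𝒮 ⊆ 𝒜, 𝒮.card = t ∧ ∃ R : Finset α, ∀ X ∈ 𝒮, ∀ Y ∈ 𝒮, X ≠ Y → X ∩ Y = R := by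
  intro h
  induction h with
  | zero =>
    intro 𝒜 hcard hbig
    simp only [Nat.factorial_zero, pow_zero, mul_one] at hbig
    -- every set in 𝒜 is ∅, so 𝒜 ⊆ {∅}, card ≤ 1, contradiction
    have : 𝒜 ⊆ {∅} := by
      intro X hX
      simp [Finset.card_eq_zero.mp (hcard X hX)]
    have := Finset.card_le_card this
    simp at this
    omega
  | succ h ih =>
    intro 𝒜 hcard hbig
    classical
    -- pairwise disjoint property
    set P : Finset (Finset α) → Prop :=
      fun 𝒟 => 𝒟 ⊆ 𝒜 ∧ ∀ X ∈ 𝒟, ∀ Y ∈ 𝒟, X ≠ Y → Disjoint X Y with hP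
    -- take 𝒟 of maximal cardinality with P
    have hne : (𝒜.powerset.filter P).Nonempty := by
      refine ⟨∅, ?_⟩
      simp [hP]
    obtain ⟨𝒟, h𝒟mem, h𝒟max⟩ := (𝒜.powerset.filter P).exists_max_image Finset.card hne
    simp only [Finset.mem_filter, Finset.mem_powerset] at h𝒟mem
    obtain ⟨h𝒟sub, h𝒟P⟩ := h𝒟mem
    simp only [hP] at h𝒟P
    obtain ⟨-, h𝒟disj⟩ := h𝒟P
    -- every X ∈ 𝒜 meets some Y ∈ 𝒟
    have hmeet : ∀ X ∈ 𝒜, ∃ Y ∈ 𝒟, (X ∩ Y).Nonempty := by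
      intro X hX
      by_contra hcon
      push_neg at hcon
      have hdisj : ∀ Y ∈ 𝒟, Disjoint X Y := by
        intro Y hY
        have := hcon Y hY
        rwa [← Finset.disjoint_iff_inter_eq_empty] at this
      have hXnot : X ∉ 𝒟 := by
        intro hXD
        have : Disjoint X X := hdisj X hXD
        have hXne : X.Nonempty := by
          rw [← Finset.card_pos, hcard X hX]; omega
        exact hXne.ne_empty (by simpa using disjoint_self.mp this)
      have hins : insert X 𝒟 ∈ 𝒜.powerset.filter P := by
        simp only [Finset.mem_filter, Finset.mem_powerset]
        refine ⟨Finset.insert_subset hX h𝒟sub, Finset.insert_subset hX h𝒟sub, ?_⟩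
        intro A hA B hB hAB
        rcases Finset.mem_insert.mp hA with hAeq | hAD
        · rcases Finset.mem_insert.mp hB with hBeq | hBD
          · exact absurd (hAeq.trans hBeq.symm) hAB
          · exact hAeq ▸ hdisj B hBD
        · rcases Finset.mem_insert.mp hB with hBeq | hBD
          · exact hBeq ▸ (hdisj A hAD).symm
          · exact h𝒟disj A hAD B hBD hAB
      have := h𝒟max _ hins
      rw [Finset.card_insert_of_notMem hXnot] at this
      omega
    by_cases hDt : t ≤ 𝒟.card
    · -- t pairwise disjoint sets give a sunflower with kernel ∅
      obtain ⟨𝒮, h𝒮sub, h𝒮card⟩ := Finset.exists_subset_card_eq hDt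
      refine ⟨𝒮, h𝒮sub.trans h𝒟sub, h𝒮card, ∅, ?_⟩
      intro X hX Y hY hXY
      exact Finset.disjoint_iff_inter_eq_empty.mp
        (h𝒟disj X (h𝒮sub hX) Y (h𝒮sub hY) hXY)
    · push_neg at hDt
      -- the union D is small
      set D : Finset α := 𝒟.biUnion id with hD
      have hDcard : D.card ≤ (t - 1) * (h + 1) := by
        calc D.card ≤ ∑ Y ∈ 𝒟, Y.card := Finset.card_biUnion_le
          _ ≤ ∑ _Y ∈ 𝒟, (h + 1) := by
              refine Finset.sum_le_sum ?_
              intro Y hY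
              rw [hcard Y (h𝒟sub hY)]
          _ = 𝒟.card * (h + 1) := by rw [Finset.sum_const, smul_eq_mul]
          _ ≤ (t - 1) * (h + 1) := by
              have : 𝒟.card ≤ t - 1 := by omega
              exact Nat.mul_le_mul_right _ this
      -- every X ∈ 𝒜 contains some a ∈ D
      have hcover : 𝒜 ⊆ D.biUnion (fun a => 𝒜.filter (fun X => a ∈ X)) := by
        intro X hX
        obtain ⟨Y, hY, a, ha⟩ := hmeet X hX
        rw [Finset.mem_inter] at ha
        refine Finset.mem_biUnion.mpr ⟨a, ?_, ?_⟩
        · exact Finset.mem_biUnion.mpr ⟨Y, hY, ha.2⟩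
        · exact Finset.mem_filter.mpr ⟨hX, ha.1⟩
      -- pigeonhole: some a is in many sets
      have hpigeon : ∃ a ∈ D,
          Nat.factorial h * (t - 1) ^ h < (𝒜.filter (fun X => a ∈ X)).card := by
        by_contra hcon
        push_neg at hcon
        have hsum : 𝒜.card ≤ ∑ a ∈ D, (𝒜.filter (fun X => a ∈ X)).card :=
          le_trans (Finset.card_le_card hcover) Finset.card_biUnion_le
        have hsum2 : ∑ a ∈ D, (𝒜.filter (fun X => a ∈ X)).card
            ≤ D.card * (Nat.factorial h * (t - 1) ^ h) := by
          calc ∑ a ∈ D, (𝒜.filter (fun X => a ∈ X)).card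
              ≤ ∑ _a ∈ D, Nat.factorial h * (t - 1) ^ h :=
                Finset.sum_le_sum fun a ha => hcon a ha
            _ = D.card * (Nat.factorial h * (t - 1) ^ h) := by
                rw [Finset.sum_const, smul_eq_mul]
        have : 𝒜.card ≤ (t - 1) * (h + 1) * (Nat.factorial h * (t - 1) ^ h) :=
          le_trans hsum (le_trans hsum2 (Nat.mul_le_mul_right _ hDcard))
        have heq : (t - 1) * (h + 1) * (Nat.factorial h * (t - 1) ^ h)
            = Nat.factorial (h + 1) * (t - 1) ^ (h + 1) := by
          rw [Nat.factorial_succ]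
          ring
        rw [heq] at this
        omega
      obtain ⟨a, haD, hacard⟩ := hpigeon
      -- build the family of links
      set ℬ : Finset (Finset α) := (𝒜.filter (fun X => a ∈ X)).image (fun X => X.erase a)
        with hB
      have hBcard : ℬ.card = (𝒜.filter (fun X => a ∈ X)).card := by
        rw [hB]
        apply Finset.card_image_of_injOn
        intro X hX Y hY hXY
        rw [Finset.mem_coe, Finset.mem_filter] at hX hY
        have hXY' : X.erase a = Y.erase a := hXY
        have : insert a (X.erase a) = insert a (Y.erase a) := by rw [hXY']
        rwa [Finset.insert_erase hX.2, Finset.insert_erase hY.2] at this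
      have hBsizes : ∀ Z ∈ ℬ, Z.card = h := by
        intro Z hZ
        rw [hB, Finset.mem_image] at hZ
        obtain ⟨X, hX, rfl⟩ := hZ
        rw [Finset.mem_filter] at hX
        rw [Finset.card_erase_of_mem hX.2, hcard X hX.1]
        omega
      have hBbig : Nat.factorial h * (t - 1) ^ h < ℬ.card := by rw [hBcard]; exact hacard
      obtain ⟨𝒮', h𝒮'sub, h𝒮'card, R, hR⟩ := ih ℬ hBsizes hBbig
      -- elements of 𝒮' don't contain a
      have hnota : ∀ Z ∈ 𝒮', a ∉ Z := by
        intro Z hZ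
        have := h𝒮'sub hZ
        rw [hB, Finset.mem_image] at this
        obtain ⟨X, _, rfl⟩ := this
        exact Finset.notMem_erase a X
      refine ⟨𝒮'.image (insert a), ?_, ?_, insert a R, ?_⟩
      · intro X hX
        rw [Finset.mem_image] at hX
        obtain ⟨Z, hZ, rfl⟩ := hX
        have := h𝒮'sub hZ
        rw [hB, Finset.mem_image] at this
        obtain ⟨X, hX, hXZ⟩ := this
        rw [Finset.mem_filter] at hX
        rw [← hXZ, Finset.insert_erase hX.2]
        exact hX.1
      · rw [Finset.card_image_of_injOn, h𝒮'card]
        intro X hX Y hY hXY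
        rw [Finset.mem_coe] at hX hY
        have : (insert a X).erase a = (insert a Y).erase a := by rw [hXY]
        rwa [Finset.erase_insert (hnota X hX), Finset.erase_insert (hnota Y hY)] at this
      · intro X hX Y hY hXY
        rw [Finset.mem_image] at hX hY
        obtain ⟨Z, hZ, rfl⟩ := hX
        obtain ⟨W, hW, rfl⟩ := hY
        have hZW : Z ≠ W := by
          intro hcon; exact hXY (by rw [hcon])
        have : insert a Z ∩ insert a W = insert a (Z ∩ W) := by
          ext x
          simp only [Finset.mem_inter, Finset.mem_insert]
          tauto
        rw [this, hR Z hZ W hW hZW]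

/-- Erdős–Rado Sunflower Lemma: every collection of more than `h! * (t-1)^h` many
`h`-element sets contains a `t`-sunflower. -/
theorem stmt1 {α : Type*} [DecidableEq α] (h t : ℕ) (𝒜 : Finset (Finset α))
    (hcard : ∀ X ∈ 𝒜, X.card = h)
    (hbig : Nat.factorial h * (t - 1) ^ h < 𝒜.card) :
    ∃ 𝒮 ⊆ 𝒜, 𝒮.card = t ∧ ∃ R : Finset α, ∀ X ∈ 𝒮, ∀ Y ∈ 𝒮, X ≠ Y → X ∩ Y = R := by
  match t with
  | 0 => exact ⟨∅, Finset.empty_subset _, rfl, ∅, by simp⟩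
  | 1 =>
    have hne : 𝒜.Nonempty := Finset.card_pos.mp (by omega)
    obtain ⟨X, hX⟩ := hne
    refine ⟨{X}, Finset.singleton_subset_iff.mpr hX, rfl, ∅, ?_⟩
    intro A hA B hB hAB
    simp only [Finset.mem_singleton] at hA hB
    exact absurd (hA.trans hB.symm) hAB
  | (n+2) => exact sunflower_aux (n+2) (by omega) h 𝒜 hcard hbig
end

section
/- Fix s ∈ ℕ and let T be a forest with α_s(T) = k, where α_s(T) is the maximum size of a stable (independent) set among the vertices of T of degree at most s. Then for all n ≥ 2|V(T)| + 2k, there exists a graph G with at most n vertices, treewidth at most s, and at least (2k)^{-k}·n^k copies of T as subgraphs. -/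
open SimpleGraph

/-- The number of copies of `H` in `G`: subgraphs of `G` isomorphic to `H`. -/
noncomputable def numCopies {α β : Type*} (H : SimpleGraph α) (G : SimpleGraph β) : ℕ :=
  Nat.card {G' : G.Subgraph // Nonempty (G'.coe ≃g H)}

/-- `α_s(T)`: the maximum size of a stable set among the vertices of `T` of degree at most `s`. -/
noncomputable def alphaDeg {V : Type*} (T : SimpleGraph V) (s : ℕ) : ℕ :=
  sSup {k | ∃ S : Finset V, S.card = k ∧ (∀ v ∈ S, (T.neighborSet v).ncard ≤ s) ∧
    ∀ u ∈ S, ∀ v ∈ S, ¬ T.Adj u v}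

/-- `G` has a tree decomposition of width at most `w`. -/
def HasTreeDecompositionOfWidth {V : Type*} (G : SimpleGraph V) (w : ℕ) : Prop :=
  ∃ (ι : Type) (T : SimpleGraph ι) (bag : ι → Finset V),
    T.Connected ∧ T.IsAcyclic ∧
    (∀ v : V, ∃ i, v ∈ bag i) ∧
    (∀ u v : V, G.Adj u v → ∃ i, u ∈ bag i ∧ v ∈ bag i) ∧
    (∀ v : V, (T.induce {i | v ∈ bag i}).Connected) ∧
    (∀ i, (bag i).card ≤ w + 1)



namespace StmtAux

variable {ι : Type*}

/-- The graph whose edges are the pairs `{x, P x}` for `P x ≠ x`. -/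
def parentGraph (P : ι → ι) : SimpleGraph ι where
  Adj x y := x ≠ y ∧ (P x = y ∨ P y = x)
  symm := by refine ⟨?_⟩; intro x y ⟨h1, h2⟩; exact ⟨h1.symm, h2.symm⟩
  loopless := by refine ⟨?_⟩; intro x ⟨h, _⟩; exact h rfl

lemma parentGraph_adj {P : ι → ι} {x y : ι} :
    (parentGraph P).Adj x y ↔ x ≠ y ∧ (P x = y ∨ P y = x) := Iff.rfl

section PT

variable {r : ι} {P : ι → ι} {d : ι → ℕ}

lemma parentGraph_reach (hP : ∀ x, x ≠ r → d (P x) < d x) (x : ι) :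
    (parentGraph P).Reachable x r := by
  by_cases hx : x = r
  · subst hx; rfl
  · have h1 : d (P x) < d x := hP x hx
    have h2 : P x ≠ x := by
      intro h; rw [h] at h1; exact lt_irrefl _ h1
    have hadj : (parentGraph P).Adj x (P x) := ⟨fun h => h2 h.symm, Or.inl rfl⟩
    exact (hadj.reachable).trans (parentGraph_reach hP (P x))
termination_by d x
decreasing_by exact hP x hx

lemma parentGraph_connected (hP : ∀ x, x ≠ r → d (P x) < d x) :
    (parentGraph P).Connected := by
  rw [SimpleGraph.connected_iff_exists_forall_reachable]
  exact ⟨r, fun w => (parentGraph_reach hP w).symm⟩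

lemma walk_support_getElem {V : Type*} {G : SimpleGraph V} {u v : V} (p : G.Walk u v) :
    ∀ (i : ℕ) (h : i < p.support.length), p.support[i] = p.getVert i := by
  induction p with
  | nil =>
    intro i h
    simp only [SimpleGraph.Walk.support_nil, List.length_singleton] at h
    interval_cases i
    rfl
  | cons hadj q ih =>
    intro i h
    cases i with
    | zero => rfl
    | succ j =>
      simp only [SimpleGraph.Walk.support_cons, List.length_cons] at h
      simp only [SimpleGraph.Walk.support_cons, List.getElem_cons_succ,
        SimpleGraph.Walk.getVert_cons_succ]
      exact ih j (by omega)

lemma parentGraph_max_nbr (hr : P r = r) (hP : ∀ x, x ≠ r → d (P x) < d x)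
    {w x : ι} (hadj : (parentGraph P).Adj w x) (hle : d x ≤ d w) : x = P w := by
  obtain ⟨hne, hor | hor⟩ := hadj
  · exact hor.symm
  · -- P x = w
    by_cases hx : x = r
    · subst hx
      rw [hr] at hor
      exact absurd hor.symm hne
    · have := hP x hx
      rw [hor] at this
      omega

lemma parentGraph_acyclic (hr : P r = r) (hP : ∀ x, x ≠ r → d (P x) < d x) :
    (parentGraph P).IsAcyclic := by
  classical
  intro v c hc
  -- pick a vertex of maximal depth on the cycle
  have hsupne : c.support.toFinset.Nonempty := by
    refine ⟨v, ?_⟩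
    simp [SimpleGraph.Walk.start_mem_support]
  obtain ⟨w, hwmem, hwmax⟩ := c.support.toFinset.exists_max_image d hsupne
  rw [List.mem_toFinset] at hwmem
  have hwmax' : ∀ y ∈ c.support, d y ≤ d w := by
    intro y hy; exact hwmax y (List.mem_toFinset.mpr hy)
  -- rotate
  set c' := c.rotate w hwmem with hc'def
  have hc' : c'.IsCycle := hc.rotate hwmem
  have hsup : ∀ y ∈ c'.support, d y ≤ d w := by
    intro y hy
    apply hwmax'
    rcases (SimpleGraph.Walk.mem_support_iff (p := c')).mp hy with h | h
    · subst h; exact hwmem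
    · have : y ∈ c.support.tail := (c.support_rotate w hwmem).mem_iff.mp h
      exact List.mem_of_mem_tail this
  have hlen3 : 3 ≤ c'.length := hc'.three_le_length
  -- the two cycle-neighbors of w both equal P w
  have hmem1 : c'.getVert 1 ∈ c'.support :=
    SimpleGraph.Walk.mem_support_iff_exists_getVert.mpr ⟨1, rfl, by omega⟩
  have hmem2 : c'.getVert (c'.length - 1) ∈ c'.support :=
    SimpleGraph.Walk.mem_support_iff_exists_getVert.mpr ⟨c'.length - 1, rfl, by omega⟩
  have hadj1 : (parentGraph P).Adj w (c'.getVert 1) := by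
    have := c'.adj_getVert_succ (i := 0) (by omega)
    simpa [SimpleGraph.Walk.getVert_zero] using this
  have hadj2 : (parentGraph P).Adj w (c'.getVert (c'.length - 1)) := by
    have := c'.adj_getVert_succ (i := c'.length - 1) (by omega)
    have h2 : c'.length - 1 + 1 = c'.length := by omega
    rw [h2] at this
    rw [SimpleGraph.Walk.getVert_length] at this
    exact this.symm
  have he1 : c'.getVert 1 = P w := parentGraph_max_nbr hr hP hadj1 (hsup _ hmem1)
  have he2 : c'.getVert (c'.length - 1) = P w := parentGraph_max_nbr hr hP hadj2 (hsup _ hmem2)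
  -- but these are distinct entries of the nodup tail
  have htail : c'.support.tail.Nodup := hc'.2
  have hlensup : c'.support.length = c'.length + 1 := c'.length_support
  have hlt1 : 1 < c'.support.length := by omega
  have hlt2 : c'.length - 1 < c'.support.length := by omega
  have g1 : c'.support[1] = c'.getVert 1 := walk_support_getElem c' 1 hlt1
  have g2 : c'.support[c'.length - 1] = c'.getVert (c'.length - 1) :=
    walk_support_getElem c' _ hlt2
  have htaillen : c'.support.tail.length = c'.length := by
    rw [List.length_tail, hlensup]; omega
  have t1 : c'.support.tail[0]'(by omega) = c'.support[1] := by
    rw [List.getElem_tail]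
  have t2 : c'.support.tail[c'.length - 2]'(by omega) = c'.support[c'.length - 1] := by
    rw [List.getElem_tail]
    congr 1
    omega
  have : (0 : ℕ) = c'.length - 2 := by
    apply (List.Nodup.getElem_inj_iff htail).mp
    rw [t1, t2, g1, g2, he1, he2]
  omega

lemma induce_connected_two_step (Γ : SimpleGraph ι) (A : Set ι) (c : ι) (hc : c ∈ A)
    (h : ∀ x, x ∈ A → x = c ∨ Γ.Adj x c ∨ ∃ y, y ∈ A ∧ Γ.Adj x y ∧ Γ.Adj y c) :
    (Γ.induce A).Connected := by
  rw [SimpleGraph.connected_iff_exists_forall_reachable]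
  refine ⟨⟨c, hc⟩, ?_⟩
  rintro ⟨x, hx⟩
  have key : ∀ x (hx : x ∈ A), (Γ.induce A).Reachable ⟨x, hx⟩ ⟨c, hc⟩ := by
      intro x hx
      rcases h x hx with h1 | h1 | ⟨y, hy, h1, h2⟩
      · subst h1; rfl
      · exact SimpleGraph.Adj.reachable (by simpa using h1)
      · exact ((SimpleGraph.Adj.reachable (by simpa using h1 : (Γ.induce A).Adj ⟨x, hx⟩ ⟨y, hy⟩))).trans
          (SimpleGraph.Adj.reachable (by simpa using h2))
  exact (key x hx).symm

end PT
end StmtAux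



namespace StmtAux2

variable {V : Type*} (T : SimpleGraph V)

/-- A choice of root in each connected component. -/
noncomputable def root (u : V) : V := (T.connectedComponentMk u).out

/-- Distance to the component's root. -/
noncomputable def depth (u : V) : ℕ := T.dist u (root T u)

lemma reachable_root (u : V) : T.Reachable u (root T u) := by
  apply ConnectedComponent.exact
  show T.connectedComponentMk u = Quot.mk _ (root T u)
  rw [root]
  exact (Quot.out_eq _).symm

lemma root_eq_of_adj {u w : V} (h : T.Adj u w) : root T u = root T w := by
  rw [root, root, ConnectedComponent.sound h.reachable]

lemma dist_root (u : V) : T.dist u (root T u) = depth T u := rfl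

/-- In an acyclic graph, two neighbors of `u` strictly closer to the root coincide. -/
lemma lower_unique (hT : T.IsAcyclic) {u w₁ w₂ : V} (h1 : T.Adj u w₁) (h2 : T.Adj u w₂)
    (d1 : depth T w₁ < depth T u) (d2 : depth T w₂ < depth T u) : w₁ = w₂ := by
  classical
  have hpu : ∀ {w : V} (h : T.Adj u w), depth T w < depth T u →
      ∃ q : T.Walk u (root T u), q.IsPath ∧ q.getVert 1 = w := by
    intro w h hd
    have hr : root T w = root T u := (root_eq_of_adj T h).symm
    have hreach : T.Reachable w (root T u) := hr ▸ reachable_root T w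
    obtain ⟨p, hp, hplen⟩ := hreach.exists_path_of_dist
    have hplen' : p.length = depth T w := by rw [hplen, ← hr, dist_root]
    have hu : u ∉ p.support := by
      intro hu
      have hsplit := p.take_spec hu
      have hlen : (p.takeUntil u hu).length + (p.dropUntil u hu).length = p.length := by
        rw [← SimpleGraph.Walk.length_append, hsplit]
      have hdist : T.dist u (root T u) ≤ (p.dropUntil u hu).length :=
        SimpleGraph.dist_le _
      rw [dist_root] at hdist
      omega
    refine ⟨SimpleGraph.Walk.cons h p, ?_, ?_⟩
    · exact hp.cons hu
    · simp [SimpleGraph.Walk.getVert_cons]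
  obtain ⟨q1, hq1, hv1⟩ := hpu h1 d1
  obtain ⟨q2, hq2, hv2⟩ := hpu h2 d2
  have : (⟨q1, hq1⟩ : T.Path u (root T u)) = ⟨q2, hq2⟩ :=
    (isAcyclic_iff_path_unique.mp hT) _ _
  have hq : q1 = q2 := congrArg Subtype.val this
  rw [← hv1, ← hv2, hq]

/-- In an acyclic graph, adjacent vertices have distinct depths. -/
lemma adj_depth_ne (hT : T.IsAcyclic) {u w : V} (h : T.Adj u w) :
    depth T u ≠ depth T w := by
  classical
  intro heq
  have hr : root T w = root T u := (root_eq_of_adj T h).symm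
  have hreachu : T.Reachable u (root T u) := reachable_root T u
  have hreachw : T.Reachable w (root T u) := hr ▸ reachable_root T w
  obtain ⟨pu, hpu, hpulen⟩ := hreachu.exists_path_of_dist
  obtain ⟨pw, hpw, hpwlen⟩ := hreachw.exists_path_of_dist
  have hpulen' : pu.length = depth T u := by rw [hpulen, dist_root]
  have hpwlen' : pw.length = depth T u := by
    rw [hpwlen, ← hr, dist_root]
    exact heq.symm
  have hu : u ∉ pw.support := by
    intro hu
    have hsplit := pw.take_spec hu
    have hlen : (pw.takeUntil u hu).length + (pw.dropUntil u hu).length = pw.length := by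
      rw [← SimpleGraph.Walk.length_append, hsplit]
    have hdist : T.dist u (root T u) ≤ (pw.dropUntil u hu).length := SimpleGraph.dist_le _
    rw [dist_root] at hdist
    have htake : (pw.takeUntil u hu).length = 0 := by omega
    exact h.ne (SimpleGraph.Walk.eq_of_length_eq_zero htake).symm
  have hq : (SimpleGraph.Walk.cons h pw).IsPath := hpw.cons hu
  have : (⟨SimpleGraph.Walk.cons h pw, hq⟩ : T.Path u (root T u)) = ⟨pu, hpu⟩ :=
    (isAcyclic_iff_path_unique.mp hT) _ _
  have hlen : (SimpleGraph.Walk.cons h pw).length = pu.length := by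
    rw [Subtype.mk_eq_mk.mp this]
  rw [SimpleGraph.Walk.length_cons, hpwlen', hpulen'] at hlen
  omega

open Classical in
/-- The parent: a neighbor strictly closer to the root, if any; else the vertex itself. -/
noncomputable def par (u : V) : V :=
  if h : ∃ w, T.Adj u w ∧ depth T w < depth T u then h.choose else u

open Classical in
lemma par_spec {u : V} (h : ∃ w, T.Adj u w ∧ depth T w < depth T u) :
    T.Adj u (par T u) ∧ depth T (par T u) < depth T u := by
  rw [par, dif_pos h]
  exact h.choose_spec

open Classical in
lemma par_eq_self {u : V} (h : ¬ ∃ w, T.Adj u w ∧ depth T w < depth T u) :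
    par T u = u := by rw [par, dif_neg h]

lemma exists_lower {u : V} (h : depth T u ≠ 0) :
    ∃ w, T.Adj u w ∧ depth T w < depth T u := by
  obtain ⟨p, hp, hplen⟩ := (reachable_root T u).exists_path_of_dist
  have hplen' : p.length = depth T u := by rw [hplen, dist_root]
  have hpos : 0 < p.length := by omega
  have hnnil : ¬ p.Nil := by
    rw [SimpleGraph.Walk.nil_iff_length_eq]
    omega
  refine ⟨p.getVert 1, ?_, ?_⟩
  · have := p.adj_getVert_succ (i := 0) (by omega)
    rwa [SimpleGraph.Walk.getVert_zero] at this
  · have hadj : T.Adj u (p.getVert 1) := by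
      have := p.adj_getVert_succ (i := 0) (by omega)
      rwa [SimpleGraph.Walk.getVert_zero] at this
    have h1 : T.dist (p.getVert 1) (root T (p.getVert 1)) ≤ p.tail.length := by
      rw [← root_eq_of_adj T hadj]
      exact SimpleGraph.dist_le p.tail
    have h2 : p.tail.length + 1 = p.length := SimpleGraph.Walk.length_tail_add_one hnnil
    rw [dist_root] at h1
    omega

lemma depth_par_lt {u : V} (h : depth T u ≠ 0) : depth T (par T u) < depth T u :=
  (par_spec T (exists_lower T h)).2

lemma par_ne {u : V} (h : depth T u ≠ 0) : par T u ≠ u := by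
  have := depth_par_lt T h
  intro he; rw [he] at this; omega

lemma depth_zero_of_par_self {u : V} (h : par T u = u) : ¬ ∃ w, T.Adj u w ∧ depth T w < depth T u := by
  intro hex
  have := (par_spec T hex).1
  rw [h] at this
  exact T.loopless.irrefl u this

/-- Every edge of an acyclic graph is a parent edge. -/
lemma adj_par (hT : T.IsAcyclic) {u w : V} (h : T.Adj u w) :
    par T u = w ∨ par T w = u := by
  have hne := adj_depth_ne T hT h
  rcases lt_or_gt_of_ne hne with hlt | hlt
  · right
    have hex : ∃ x, T.Adj w x ∧ depth T x < depth T w := ⟨u, h.symm, hlt⟩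
    obtain ⟨ha, hd⟩ := par_spec T hex
    exact lower_unique T hT ha h.symm hd hlt
  · left
    have hex : ∃ x, T.Adj u x ∧ depth T x < depth T u := ⟨w, h, hlt⟩
    obtain ⟨ha, hd⟩ := par_spec T hex
    exact lower_unique T hT ha h hd hlt

lemma par_adj {u w : V} (h : par T u = w) (hne : u ≠ w) : T.Adj u w := by
  by_cases hex : ∃ x, T.Adj u x ∧ depth T x < depth T u
  · rw [← h]; exact (par_spec T hex).1
  · rw [par_eq_self T hex] at h; exact absurd h hne

lemma depth_ne_zero_of_par_ne {u : V} (h : par T u ≠ u) : depth T u ≠ 0 := by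
  intro h0
  apply h
  apply par_eq_self
  rintro ⟨w, -, hw⟩
  omega

end StmtAux2

namespace StmtAux3

-- by the real StmtAux/StmtAux2 in the final file
section

variable {V : Type} [Fintype V] (T : SimpleGraph V) (S : Finset V) (m : ℕ)

def pi : (V ⊕ (↥S × Fin m)) → V := Sum.elim id (fun p => ↑p.1)

open StmtAux2 in
noncomputable def Pt : Option (V ⊕ (↥S × Fin m)) → Option (V ⊕ (↥S × Fin m))
  | none => none
  | some (Sum.inl u) => if depth T u = 0 then none else some (Sum.inl (par T u))
  | some (Sum.inr (v, _)) => some (Sum.inl ↑v)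

open StmtAux2 in
noncomputable def dt : Option (V ⊕ (↥S × Fin m)) → ℕ
  | none => 0
  | some (Sum.inl u) => depth T u + 1
  | some (Sum.inr (v, _)) => depth T ↑v + 2

open Classical StmtAux2 in
noncomputable def bag : Option (V ⊕ (↥S × Fin m)) → Finset (V ⊕ (↥S × Fin m))
  | none => ∅
  | some (Sum.inl u) =>
      if u ∈ S then insert (Sum.inl u) ((T.neighborFinset u).image Sum.inl)
      else {Sum.inl u, Sum.inl (par T u)}
  | some (Sum.inr (v, i)) => insert (Sum.inr (v, i)) ((T.neighborFinset ↑v).image Sum.inl)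

lemma bag_none : bag T S m none = ∅ := rfl

open Classical StmtAux2 in
lemma bag_inl (u : V) : bag T S m (some (Sum.inl u)) =
    (if u ∈ S then insert (Sum.inl u) ((T.neighborFinset u).image Sum.inl)
     else {Sum.inl u, Sum.inl (par T u)}) := rfl

open Classical in
lemma bag_inr (v : ↥S) (i : Fin m) : bag T S m (some (Sum.inr (v, i))) =
    insert (Sum.inr (v, i) : V ⊕ (↥S × Fin m))
      ((T.neighborFinset (↑v : V)).image Sum.inl) := rfl

open StmtAux StmtAux2 in
theorem decomp (hT : T.IsAcyclic) (s : ℕ) (hs : 1 ≤ s)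
    (hdeg : ∀ v ∈ S, (T.neighborSet v).ncard ≤ s)
    (hstab : ∀ u ∈ S, ∀ v ∈ S, ¬ T.Adj u v) :
    HasTreeDecompositionOfWidth (T.comap (pi S m)) s := by
  classical
  have hP : ∀ x, x ≠ (none : Option (V ⊕ (↥S × Fin m))) → dt T S m (Pt T S m x) < dt T S m x := by
    intro x hx
    match x with
    | none => exact absurd rfl hx
    | some (Sum.inl u) =>
      by_cases h0 : depth T u = 0
      · simp [Pt, dt, h0]
      · have := depth_par_lt T h0
        simp only [Pt, dt, if_neg h0]
        omega
    | some (Sum.inr (v, i)) => simp [Pt, dt]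
  have hr : Pt T S m none = none := rfl
  have hdegF : ∀ v ∈ S, (T.neighborFinset v).card ≤ s := by
    intro v hv
    have e1 : ((T.neighborFinset v : Set V)).ncard = (T.neighborFinset v).card :=
      Set.ncard_coe_finset _
    have e2 : (T.neighborFinset v : Set V) = T.neighborSet v := by
      rw [SimpleGraph.neighborFinset_def, Set.coe_toFinset]
    rw [← e1, e2]
    exact hdeg v hv
  -- the key adjacency fact in the decomposition tree
  have key : ∀ u w : V, T.Adj w u →
      (parentGraph (Pt T S m)).Adj (some (Sum.inl w)) (some (Sum.inl u)) := by
    intro u w hw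
    have hne : (some (Sum.inl w) : Option (V ⊕ (↥S × Fin m))) ≠ some (Sum.inl u) := by
      simp [hw.ne]
    rcases adj_par T hT hw with hpw | hpu
    · -- par w = u
      have hd : depth T w ≠ 0 := by
        apply depth_ne_zero_of_par_ne
        rw [hpw]; exact hw.ne.symm
      refine ⟨hne, Or.inl ?_⟩
      show Pt T S m (some (Sum.inl w)) = _
      rw [Pt, if_neg hd, hpw]
    · -- par u = w
      have hd : depth T u ≠ 0 := by
        apply depth_ne_zero_of_par_ne
        rw [hpu]; exact hw.ne
      refine ⟨hne, Or.inr ?_⟩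
      show Pt T S m (some (Sum.inl u)) = _
      rw [Pt, if_neg hd, hpu]
  refine ⟨Option (V ⊕ (↥S × Fin m)), parentGraph (Pt T S m), bag T S m,
    parentGraph_connected hP, parentGraph_acyclic hr hP, ?_, ?_, ?_, ?_⟩
  · -- every vertex in some bag
    rintro (u | ⟨v, i⟩)
    · refine ⟨some (Sum.inl u), ?_⟩
      by_cases hu : u ∈ S <;> simp [bag_inl, hu]
    · exact ⟨some (Sum.inr (v, i)), by simp [bag_inr]⟩
  · -- every edge in some bag
    rintro (u | ⟨v, i⟩) (w | ⟨z, j⟩) hadj <;>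
      rw [comap_adj] at hadj
    · -- inl, inl
      simp only [pi, Sum.elim_inl, id] at hadj
      by_cases hu : u ∈ S
      · refine ⟨some (Sum.inl u), ?_, ?_⟩ <;> simp [bag_inl, hu, mem_neighborFinset, hadj]
      · by_cases hw : w ∈ S
        · refine ⟨some (Sum.inl w), ?_, ?_⟩ <;>
            simp [bag_inl, hw, mem_neighborFinset, hadj.symm]
        · rcases adj_par T hT hadj with hp | hp
          · exact ⟨some (Sum.inl u), by simp [bag_inl, hu], by simp [bag_inl, hu, hp]⟩
          · exact ⟨some (Sum.inl w), by simp [bag_inl, hw, hp], by simp [bag_inl, hw]⟩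
    · -- inl, inr
      simp only [pi, Sum.elim_inl, Sum.elim_inr, id] at hadj
      refine ⟨some (Sum.inr (z, j)), ?_, ?_⟩ <;>
        simp [bag_inr, mem_neighborFinset, hadj.symm]
    · -- inr, inl
      simp only [pi, Sum.elim_inl, Sum.elim_inr, id] at hadj
      refine ⟨some (Sum.inr (v, i)), ?_, ?_⟩ <;>
        simp [bag_inr, mem_neighborFinset, hadj]
    · -- inr, inr : impossible
      simp only [pi, Sum.elim_inr] at hadj
      exact absurd hadj (hstab _ v.2 _ z.2)
  · -- connectivity of the set of bags containing a fixed vertex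
    rintro (u | ⟨v, i⟩)
    · -- vertex inl u
      have hcen : (Sum.inl u : V ⊕ (↥S × Fin m)) ∈ bag T S m (some (Sum.inl u)) := by
        by_cases hu : u ∈ S <;> simp [bag_inl, hu]
      apply induce_connected_two_step _ _ (some (Sum.inl u)) hcen
      rintro (_ | (w | ⟨z, j⟩)) hx
      · simp [bag_none] at hx
      · -- node some (inl w)
        by_cases hwu : w = u
        · subst hwu; exact Or.inl rfl
        · right; left
          by_cases hw : w ∈ S
          · simp only [Set.mem_setOf_eq, bag_inl, if_pos hw, Finset.mem_insert, Finset.mem_image,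
              mem_neighborFinset] at hx
            rcases hx with hx | ⟨a, ha, hax⟩
            · exact absurd (Sum.inl.inj hx) (Ne.symm hwu)
            · cases Sum.inl.inj hax
              exact key u w ha
          · simp only [Set.mem_setOf_eq, bag_inl, if_neg hw, Finset.mem_insert, Finset.mem_singleton] at hx
            rcases hx with hx | hx
            · exact absurd (Sum.inl.inj hx) (Ne.symm hwu)
            · have hp : par T w = u := (Sum.inl.inj hx).symm
              exact key u w (par_adj T hp hwu)
      · -- node some (inr (z, j))
        right; right
        simp only [Set.mem_setOf_eq, bag_inr, Finset.mem_insert, Finset.mem_image, mem_neighborFinset] at hx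
        rcases hx with hx | ⟨a, ha, hax⟩
        · exact absurd hx (by simp)
        · cases Sum.inl.inj hax
          refine ⟨some (Sum.inl ↑z), ?_, ?_, ?_⟩
          · show Sum.inl u ∈ bag T S m _
            simp [bag_inl, if_pos z.2, mem_neighborFinset, ha]
          · exact ⟨by simp, Or.inl rfl⟩
          · exact key u ↑z ha
    · -- vertex inr (v, i): only its own bag contains it
      have hcen : (Sum.inr (v, i) : V ⊕ (↥S × Fin m)) ∈ bag T S m (some (Sum.inr (v, i))) := by
        simp [bag_inr]
      apply induce_connected_two_step _ _ (some (Sum.inr (v, i))) hcen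
      rintro (_ | (w | ⟨z, j⟩)) hx
      · simp [bag_none] at hx
      · by_cases hw : w ∈ S <;> simp [bag_inl, hw] at hx
      · left
        simp only [Set.mem_setOf_eq, bag_inr, Finset.mem_insert, Finset.mem_image, mem_neighborFinset] at hx
        rcases hx with hx | ⟨a, ha, hax⟩
        · cases Sum.inr.inj hx; rfl
        · exact absurd hax (by simp)
  · -- bag sizes
    rintro (_ | (u | ⟨v, i⟩))
    · simp [bag_none]
    · by_cases hu : u ∈ S
      · rw [bag_inl, if_pos hu]
        calc (insert (Sum.inl u : V ⊕ (↥S × Fin m)) ((T.neighborFinset u).image Sum.inl)).card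
            ≤ ((T.neighborFinset u).image Sum.inl).card + 1 := Finset.card_insert_le _ _
          _ ≤ (T.neighborFinset u).card + 1 := by
              have := Finset.card_image_le (s := T.neighborFinset u) (f := (Sum.inl : V → V ⊕ (↥S × Fin m)))
              omega
          _ ≤ s + 1 := by have := hdegF u hu; omega
      · rw [bag_inl, if_neg hu]
        calc ({Sum.inl u, Sum.inl (par T u)} : Finset (V ⊕ (↥S × Fin m))).card
            ≤ 2 := Finset.card_le_two
          _ ≤ s + 1 := by omega
    · rw [bag_inr]
      calc (insert (Sum.inr (v, i) : V ⊕ (↥S × Fin m)) ((T.neighborFinset ↑v).image Sum.inl)).card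
          ≤ ((T.neighborFinset ↑v).image Sum.inl).card + 1 := Finset.card_insert_le _ _
        _ ≤ (T.neighborFinset ↑v).card + 1 := by
            have := Finset.card_image_le (s := T.neighborFinset (↑v : V)) (f := (Sum.inl : V → V ⊕ (↥S × Fin m)))
            omega
        _ ≤ s + 1 := by have := hdegF ↑v v.2; omega

end
end StmtAux3


open StmtAux StmtAux2 StmtAux3

theorem stmt4 {VT : Type} [Fintype VT] (s : ℕ) (hs : 1 ≤ s)
    (T : SimpleGraph VT) (hT : T.IsAcyclic) (k : ℕ) (hk : alphaDeg T s = k) :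
    ∀ n : ℕ, 2 * Fintype.card VT + 2 * k ≤ n →
      ∃ (VG : Type) (_ : Finite VG) (G : SimpleGraph VG),
        Nat.card VG ≤ n ∧ HasTreeDecompositionOfWidth G s ∧
        n ^ k ≤ (2 * k) ^ k * numCopies T G := by
  classical
  intro n hn
  -- extract a maximum stable set of low-degree vertices
  have hne : {k | ∃ S : Finset VT, S.card = k ∧ (∀ v ∈ S, (T.neighborSet v).ncard ≤ s) ∧
      ∀ u ∈ S, ∀ v ∈ S, ¬ T.Adj u v}.Nonempty :=
    ⟨0, ∅, by simp, by simp, by simp⟩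
  have hbdd : BddAbove {k | ∃ S : Finset VT, S.card = k ∧ (∀ v ∈ S, (T.neighborSet v).ncard ≤ s) ∧
      ∀ u ∈ S, ∀ v ∈ S, ¬ T.Adj u v} := by
    refine ⟨Fintype.card VT, ?_⟩
    rintro x ⟨S, hS, -, -⟩
    rw [← hS]
    exact Finset.card_le_univ S
  have hmem := Nat.sSup_mem hne hbdd
  rw [alphaDeg] at hk
  rw [hk] at hmem
  obtain ⟨S, hScard, hSdeg, hSstab⟩ := hmem
  -- the blow-up parameter
  set m : ℕ := (n + (2 * k - 1)) / (2 * k) with hm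
  have harith : Fintype.card VT + k * m ≤ n ∧ n ^ k ≤ (2 * k) ^ k * m ^ k := by
    rcases Nat.eq_zero_or_pos k with hk0 | hkpos
    · subst hk0
      constructor
      · simp only [Nat.zero_mul, Nat.add_zero]
        omega
      · simp
    · have hd : 0 < 2 * k := by omega
      have hdm := Nat.div_add_mod (n + (2 * k - 1)) (2 * k)
      have hmod : (n + (2 * k - 1)) % (2 * k) < 2 * k := Nat.mod_lt _ hd
      rw [← hm] at hdm
      have hdm' : 2 * (k * m) + (n + (2 * k - 1)) % (2 * k) = n + (2 * k - 1) := by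
        rw [show 2 * (k * m) = 2 * k * m by ring]
        exact hdm
      clear hdm
      constructor
      · omega
      · have h1 : n ≤ 2 * k * m := by
          have h2 : n ≤ 2 * (k * m) := by omega
          calc n ≤ 2 * (k * m) := h2
            _ = 2 * k * m := by ring
        calc n ^ k ≤ (2 * k * m) ^ k := Nat.pow_le_pow_left h1 k
          _ = (2 * k) ^ k * m ^ k := by rw [mul_pow]
  -- the host graph
  refine ⟨VT ⊕ (↥S × Fin m), inferInstance, T.comap (pi S m), ?_, ?_, ?_⟩
  · -- cardinality
    have : Nat.card (VT ⊕ (↥S × Fin m)) = Fintype.card VT + k * m := by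
      rw [Nat.card_sum, Nat.card_prod, Nat.card_eq_fintype_card (α := VT),
        Nat.card_eq_fintype_card (α := ↥S), Fintype.card_coe, hScard,
        Nat.card_eq_fintype_card (α := Fin m), Fintype.card_fin]
    rw [this]
    exact harith.1
  · -- tree decomposition
    exact decomp T S m hT s hs hSdeg hSstab
  · -- number of copies
    have hcnt : m ^ k ≤ numCopies T (T.comap (pi S m)) := by
      set G := T.comap (pi S m) with hG
      haveI hfinsub : Finite G.Subgraph := by
        apply Finite.of_injective (fun H : G.Subgraph => (H.verts, H.Adj))
        intro H1 H2 h12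
        exact SimpleGraph.Subgraph.ext (congrArg Prod.fst h12) (congrArg Prod.snd h12)
      haveI : Finite {G' : G.Subgraph // Nonempty (G'.coe ≃g T)} := Subtype.finite
      -- the embeddings
      let e : (↥S → Fin m) → VT → VT ⊕ (↥S × Fin m) := fun f v =>
        if h : v ∈ S then Sum.inr (⟨v, h⟩, f ⟨v, h⟩) else Sum.inl v
      have hπe : ∀ f v, pi S m (e f v) = v := by
        intro f v
        by_cases h : v ∈ S <;> simp [e, pi, h]
      have hinj : ∀ f, Function.Injective (e f) := by
        intro f a b hab
        have := congrArg (pi S m) hab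
        rwa [hπe, hπe] at this
      let hom : (↥S → Fin m) → T →g G := fun f =>
        ⟨e f, by
          intro a b hab
          show T.Adj (pi S m (e f a)) (pi S m (e f b))
          rwa [hπe, hπe]⟩
      have hiso : ∀ f, Nonempty (((⊤ : T.Subgraph).map (hom f)).coe ≃g T) := by
        intro f
        let g : VT → ((⊤ : T.Subgraph).map (hom f)).verts := fun v =>
          ⟨e f v, ⟨v, Set.mem_univ v, rfl⟩⟩
        have hb : Function.Bijective g := by
          constructor
          · intro a b hab
            exact hinj f (congrArg Subtype.val hab)
          · rintro ⟨x, ⟨a, -, rfl⟩⟩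
            exact ⟨a, rfl⟩
        have hiso2 : T ≃g ((⊤ : T.Subgraph).map (hom f)).coe := by
          refine ⟨Equiv.ofBijective g hb, ?_⟩
          intro a b
          show ((⊤ : T.Subgraph).map (hom f)).Adj (e f a) (e f b) ↔ T.Adj a b
          constructor
          · rintro ⟨x, y, hxy, hx, hy⟩
            rw [SimpleGraph.Subgraph.top_adj] at hxy
            have hxa : x = a := hinj f hx
            have hyb : y = b := hinj f hy
            rwa [hxa, hyb] at hxy
          · intro h
            exact ⟨a, b, SimpleGraph.Subgraph.top_adj.mpr h, rfl, rfl⟩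
        exact ⟨hiso2.symm⟩
      let F : (↥S → Fin m) → {G' : G.Subgraph // Nonempty (G'.coe ≃g T)} := fun f =>
        ⟨(⊤ : T.Subgraph).map (hom f), hiso f⟩
      have he_mem : ∀ (f : ↥S → Fin m) (x : ↥S), e f ↑x = Sum.inr (x, f x) := by
        intro f x
        show (if h : (↑x : VT) ∈ S then (Sum.inr (⟨↑x, h⟩, f ⟨↑x, h⟩) : VT ⊕ (↥S × Fin m))
              else Sum.inl ↑x) = _
        rw [dif_pos x.2]
      have he_nmem : ∀ (f : ↥S → Fin m) (a : VT), a ∉ S → e f a = Sum.inl a := by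
        intro f a h
        show (if h : a ∈ S then (Sum.inr (⟨a, h⟩, f ⟨a, h⟩) : VT ⊕ (↥S × Fin m))
              else Sum.inl a) = _
        rw [dif_neg h]
      have hFinj : Function.Injective F := by
        intro f1 f2 h12
        have hv : ((⊤ : T.Subgraph).map (hom f1)).verts = ((⊤ : T.Subgraph).map (hom f2)).verts := by
          have h13 := congrArg Subtype.val h12
          simp only [F] at h13
          rw [h13]
        funext x
        have hx1 : (Sum.inr (x, f1 x) : VT ⊕ (↥S × Fin m)) ∈ ((⊤ : T.Subgraph).map (hom f1)).verts :=
          ⟨↑x, Set.mem_univ _, he_mem f1 x⟩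
        rw [hv] at hx1
        obtain ⟨a, -, ha⟩ := hx1
        have ha' : e f2 a = Sum.inr (x, f1 x) := ha
        by_cases h : a ∈ S
        · have hb : e f2 a = Sum.inr ((⟨a, h⟩ : ↥S), f2 ⟨a, h⟩) := he_mem f2 ⟨a, h⟩
          have hpair : ((⟨a, h⟩ : ↥S), f2 ⟨a, h⟩) = (x, f1 x) :=
            Sum.inr.inj (hb.symm.trans ha')
          have h1 : (⟨a, h⟩ : ↥S) = x := congrArg Prod.fst hpair
          have h2 : f2 ⟨a, h⟩ = f1 x := congrArg Prod.snd hpair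
          rw [h1] at h2
          exact h2.symm
        · rw [he_nmem f2 a h] at ha'
          exact absurd ha' (by simp)
      have hle : Nat.card (↥S → Fin m) ≤ numCopies T G :=
        Nat.card_le_card_of_injective F hFinj
      have hcard : Nat.card (↥S → Fin m) = m ^ k := by
        rw [Nat.card_fun, Nat.card_eq_fintype_card (α := ↥S), Fintype.card_coe, hScard,
          Nat.card_eq_fintype_card (α := Fin m), Fintype.card_fin]
      rwa [hcard] at hle
    calc n ^ k ≤ (2 * k) ^ k * m ^ k := harith.2
      _ ≤ (2 * k) ^ k * numCopies T (T.comap (pi S m)) :=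
          Nat.mul_le_mul_left _ hcnt
end

section
/- Let T be a forest, S a stable set in T of size k, and G obtained from T by adding, for each v ∈ S, a set C_v of m new vertices each adjacent exactly to N_T(v). Then G contains at least m^k copies of T as subgraphs. -/
open SimpleGraph

/-- The blow-up of `T` at the stable set `S`: for each `v ∈ S`, add `m` new vertices,
each adjacent exactly to the neighbourhood of `v` in `T`. -/
def blowup {V : Type*} (T : SimpleGraph V) (S : Finset V) (m : ℕ) :
    SimpleGraph (V ⊕ (↥S × Fin m)) :=
  SimpleGraph.fromRel (fun a b =>
    match a, b with
    | Sum.inl u, Sum.inl v => T.Adj u v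
    | Sum.inl u, Sum.inr (v, _) => T.Adj u v.1
    | Sum.inr (v, _), Sum.inl u => T.Adj v.1 u
    | _, _ => False)

theorem stmt6 {V : Type} [Fintype V] (T : SimpleGraph V) (hT : T.IsAcyclic)
    (S : Finset V) (m : ℕ)
    (hstable : ∀ u ∈ S, ∀ v ∈ S, ¬ T.Adj u v) :
    m ^ S.card ≤ numCopies T (blowup T S m) := by
  classical
  let ι : (↥S → Fin m) → V → V ⊕ (↥S × Fin m) := fun f v =>
    if h : v ∈ S then Sum.inr (⟨v, h⟩, f ⟨v, h⟩) else Sum.inl v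
  have hinj : ∀ f, Function.Injective (ι f) := by
    intro f u v h
    by_cases hu : u ∈ S <;> by_cases hv : v ∈ S <;>
      simp [ι, hu, hv] at h <;> simp_all
  have hadj : ∀ f u v, T.Adj u v → (blowup T S m).Adj (ι f u) (ι f v) := by
    intro f u v h
    by_cases hu : u ∈ S <;> by_cases hv : v ∈ S
    · exact absurd h (hstable u hu v hv)
    · simp only [ι, dif_pos hu, dif_neg hv, blowup, SimpleGraph.fromRel_adj]
      exact ⟨by simp, Or.inl h⟩
    · simp only [ι, dif_neg hu, dif_pos hv, blowup, SimpleGraph.fromRel_adj]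
      exact ⟨by simp, Or.inl h⟩
    · simp only [ι, dif_neg hu, dif_neg hv, blowup, SimpleGraph.fromRel_adj]
      exact ⟨by simp [h.ne], Or.inl h⟩
  let Gf : (↥S → Fin m) → (blowup T S m).Subgraph := fun f =>
    { verts := Set.range (ι f)
      Adj := fun a b => ∃ u v, T.Adj u v ∧ a = ι f u ∧ b = ι f v
      adj_sub := by rintro a b ⟨u, v, h, rfl, rfl⟩; exact hadj f u v h
      edge_vert := by rintro a b ⟨u, v, h, rfl, rfl⟩; exact ⟨u, rfl⟩
      symm := ⟨by rintro a b ⟨u, v, h, rfl, rfl⟩; exact ⟨v, u, h.symm, rfl, rfl⟩⟩ }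
  have hiso : ∀ f, Nonempty ((Gf f).coe ≃g T) := by
    intro f
    refine ⟨SimpleGraph.Iso.symm
      { toEquiv := Equiv.ofInjective (ι f) (hinj f), map_rel_iff' := ?_ }⟩
    intro u v
    show (Gf f).Adj (ι f u) (ι f v) ↔ T.Adj u v
    constructor
    · rintro ⟨u', v', h, h1, h2⟩
      rw [hinj f h1, hinj f h2]; exact h
    · intro h; exact ⟨u, v, h, rfl, rfl⟩
  have hGinj : Function.Injective Gf := by
    intro f g h
    funext s
    have hv : (Sum.inr (s, f s) : V ⊕ (↥S × Fin m)) ∈ (Gf g).verts := by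
      rw [← h]
      exact ⟨s.1, by simp [ι, s.2]⟩
    obtain ⟨w, hw⟩ := hv
    by_cases hwS : w ∈ S
    · simp only [ι, dif_pos hwS, Sum.inr.injEq, Prod.mk.injEq] at hw
      obtain ⟨h1, h2⟩ := hw
      subst h1
      exact h2.symm
    · simp [ι, hwS] at hw
  haveI : Finite ((blowup T S m).Subgraph) :=
    Finite.of_injective (fun H => (H.verts, H.Adj))
      (fun H1 H2 hh =>
        SimpleGraph.Subgraph.ext (congrArg Prod.fst hh) (congrArg Prod.snd hh))
  have key := Nat.card_le_card_of_injective
    (fun f => (⟨Gf f, hiso f⟩ :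
      {G' : (blowup T S m).Subgraph // Nonempty (G'.coe ≃g T)}))
    (fun f g hh => hGinj (congrArg Subtype.val hh))
  calc m ^ S.card = Nat.card (↥S → Fin m) := by
        simp [Nat.card_eq_fintype_card, Fintype.card_fun]
    _ ≤ _ := key
end

section
/- Fix k ∈ ℕ and let 𝓓_k be the class of k-degenerate graphs. For every fixed forest T, the maximum number of copies of T over n-vertex k-degenerate graphs is Θ(n^{α_k(T)}), where α_k(T) is the maximum size of a stable set among vertices of T of degree at most k. -/
open SimpleGraph

/-- `G` is `k`-degenerate: every non-empty (induced) subgraph has a vertex of degree at most `k`. -/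
def Degenerate {V : Type*} (k : ℕ) (G : SimpleGraph V) : Prop :=
  ∀ s : Set V, s.Nonempty → ∃ v ∈ s, (G.neighborSet v ∩ s).ncard ≤ k

set_option linter.unusedSectionVars false



section Forest
variable {V : Type*} [DecidableEq V] {T : SimpleGraph V} {r u v : V}

private lemma exists_shortest_path (h : T.Reachable r u) :
    ∃ p : T.Walk r u, p.IsPath ∧ p.length = T.dist r u := by
  obtain ⟨w, hw⟩ := h.exists_walk_length_eq_dist
  exact ⟨w.bypass, w.bypass_isPath,
    le_antisymm (hw ▸ w.length_bypass_le) (SimpleGraph.dist_le _)⟩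

private lemma concat_path {p : T.Walk r u} (hp : p.IsPath) (h : T.Adj u v)
    (hv : v ∉ p.support) : (p.concat h).IsPath := by
  rw [← Walk.isPath_reverse_iff, Walk.reverse_concat]
  refine (hp.reverse).cons ?_
  simpa using hv

private lemma adj_dist_ne (hT : T.IsAcyclic) (hr : T.Reachable r u) (h : T.Adj u v) :
    T.dist r u ≠ T.dist r v := by
  intro heq
  have hpu := isAcyclic_iff_path_unique.mp hT
  obtain ⟨p, hp, hpl⟩ := exists_shortest_path hr
  by_cases hv : v ∈ p.support
  · have h1 : T.dist r v ≤ (p.takeUntil v hv).length := SimpleGraph.dist_le _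
    have h2 := congrArg Walk.length (p.take_spec hv)
    rw [Walk.length_append] at h2
    have h3 : (p.dropUntil v hv).length = 0 := by omega
    exact h.ne' (Walk.eq_of_length_eq_zero h3)
  · obtain ⟨q, hq, hql⟩ := exists_shortest_path (hr.trans h.reachable)
    have hcp : (p.concat h).IsPath := concat_path hp h hv
    have hequ := hpu ⟨p.concat h, hcp⟩ ⟨q, hq⟩
    have := congrArg (fun z : T.Path r v => z.1.length) hequ
    simp only [Walk.length_concat] at this
    omega

private lemma parents_eq (hT : T.IsAcyclic) {u₁ u₂ : V} (hr : T.Reachable r v)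
    (h1 : T.Adj u₁ v) (h2 : T.Adj u₂ v)
    (hd1 : T.dist r u₁ < T.dist r v) (hd2 : T.dist r u₂ < T.dist r v) : u₁ = u₂ := by
  have hpu := isAcyclic_iff_path_unique.mp hT
  obtain ⟨p1, hp1, hl1⟩ := exists_shortest_path (hr.trans h1.symm.reachable)
  obtain ⟨p2, hp2, hl2⟩ := exists_shortest_path (hr.trans h2.symm.reachable)
  have hv1 : v ∉ p1.support := by
    intro hv
    have ha : T.dist r v ≤ (p1.takeUntil v hv).length := SimpleGraph.dist_le _
    have hb := p1.length_takeUntil_le hv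
    omega
  have hv2 : v ∉ p2.support := by
    intro hv
    have ha : T.dist r v ≤ (p2.takeUntil v hv).length := SimpleGraph.dist_le _
    have hb := p2.length_takeUntil_le hv
    omega
  have hequ := hpu ⟨p1.concat h1, concat_path hp1 h1 hv1⟩ ⟨p2.concat h2, concat_path hp2 h2 hv2⟩
  have hval : p1.concat h1 = p2.concat h2 := congrArg Subtype.val hequ
  have hrev := congrArg Walk.reverse hval
  rw [Walk.reverse_concat, Walk.reverse_concat] at hrev
  have hsupp := congrArg Walk.support hrev
  rw [Walk.support_cons, Walk.support_cons] at hsupp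
  have hts : p1.reverse.support = p2.reverse.support := by
    exact List.cons_injective hsupp
  rw [p1.reverse.support_eq_cons, p2.reverse.support_eq_cons] at hts
  exact List.head_eq_of_cons_eq hts

theorem forest_one_degenerate [Finite V] (hT : T.IsAcyclic) (s : Set V) (hs : s.Nonempty) :
    ∃ x ∈ s, (T.neighborSet x ∩ s).ncard ≤ 1 := by
  classical
  set root : V → V := fun x => Quot.out (T.connectedComponentMk x) with hrootdef
  have hreach : ∀ x, T.Reachable (root x) x := by
    intro x
    apply ConnectedComponent.exact
    exact Quot.out_eq _
  have hrooteq : ∀ {a b : V}, T.Adj a b → root a = root b := by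
    intro a b hab
    simp only [hrootdef]
    rw [ConnectedComponent.connectedComponentMk_eq_of_adj hab]
  obtain ⟨x, hxs, hmax⟩ := Set.exists_max_image s (fun y => T.dist (root y) y) s.toFinite hs
  refine ⟨x, hxs, ?_⟩
  rw [Set.ncard_le_one (Set.toFinite _)]
  rintro a ⟨ha1, ha2⟩ b ⟨hb1, hb2⟩
  rw [mem_neighborSet] at ha1 hb1
  have hra : root a = root x := hrooteq ha1.symm
  have hrb : root b = root x := hrooteq hb1.symm
  have hda : T.dist (root x) a < T.dist (root x) x := by
    have h1 := hmax a ha2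
    rw [hra] at h1
    have h2 := adj_dist_ne hT (hreach x) ha1
    omega
  have hdb : T.dist (root x) b < T.dist (root x) x := by
    have h1 := hmax b hb2
    rw [hrb] at h1
    have h2 := adj_dist_ne hT (hreach x) hb1
    omega
  exact parents_eq hT (hreach x) ha1.symm hb1.symm hda hdb

end Forest



theorem exists_degeneracy_order (k : ℕ) :
    ∀ (n : ℕ) (V : Type) [Fintype V] (G : SimpleGraph V), Fintype.card V = n →
      Degenerate k G → ∃ r : V → ℕ, Function.Injective r ∧
        ∀ v, (G.neighborSet v ∩ {w | r v < r w}).ncard ≤ k := by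
  intro n
  induction n using Nat.strong_induction_on with
  | _ n IH =>
    intro V _ G hcard hG
    classical
    rcases Nat.eq_zero_or_pos n with h0 | hpos
    · subst h0
      have he : IsEmpty V := Fintype.card_eq_zero_iff.mp hcard
      exact ⟨fun v => 0, fun a => (he.elim a), fun v => (he.elim v)⟩
    · have hne : Nonempty V := Fintype.card_pos_iff.mp (hcard ▸ hpos)
      obtain ⟨v0, -, hv0⟩ := hG Set.univ (Set.univ_nonempty)
      rw [Set.inter_univ] at hv0
      set V' := {w : V // w ≠ v0} with hV'
      have hcard' : Fintype.card V' = n - 1 := by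
        have h1 : Fintype.card {w : V // ¬ w = v0} = Fintype.card V - 1 := by
          rw [Fintype.card_subtype_compl, Fintype.card_subtype_eq]
        rw [hcard] at h1
        exact h1
      set G' : SimpleGraph V' := G.comap Subtype.val with hG'def
      have hG' : Degenerate k G' := by
        intro s' hs'
        obtain ⟨v, hv, hvk⟩ := hG (Subtype.val '' s') (hs'.image _)
        obtain ⟨v', hv's, rfl⟩ := hv
        refine ⟨v', hv's, le_trans ?_ hvk⟩
        apply Set.ncard_le_ncard_of_injOn Subtype.val
        · rintro a ⟨ha1, ha2⟩
          exact ⟨ha1, Set.mem_image_of_mem _ ha2⟩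
        · exact Subtype.val_injective.injOn
      obtain ⟨r', hr'inj, hr'⟩ := IH (n - 1) (by omega) V' G' hcard' hG'
      refine ⟨fun w => if h : w = v0 then 0 else r' ⟨w, h⟩ + 1, ?_, ?_⟩
      · intro a b hab
        simp only at hab
        by_cases ha : a = v0 <;> by_cases hb : b = v0
        · rw [ha, hb]
        · exfalso; rw [dif_pos ha, dif_neg hb] at hab; omega
        · exfalso; rw [dif_neg ha, dif_pos hb] at hab; omega
        · rw [dif_neg ha, dif_neg hb] at hab
          have h2 : r' ⟨a, ha⟩ = r' ⟨b, hb⟩ := by omega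
          exact congrArg Subtype.val (hr'inj h2)
      · intro v
        by_cases hv : v = v0
        · subst hv
          exact le_trans (Set.ncard_le_ncard Set.inter_subset_left (Set.toFinite _)) hv0
        · refine le_trans ?_ (hr' ⟨v, hv⟩)
          apply Set.ncard_le_ncard_of_injOn (fun w => if h : w = v0 then ⟨v, hv⟩ else ⟨w, h⟩)
          · rintro w ⟨hw1, hw2⟩
            simp only [Set.mem_setOf_eq, dif_neg hv] at hw2
            have hwv0 : w ≠ v0 := by
              intro h; subst h; simp [dif_pos] at hw2
            refine ⟨?_, ?_⟩
            · simp only [dif_neg hwv0, hG'def, mem_neighborSet, comap_adj]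
              exact hw1
            · simp only [dif_neg hwv0, Set.mem_setOf_eq]
              rw [dif_neg hwv0] at hw2
              omega
          · rintro a ⟨ha1, ha2⟩ b ⟨hb1, hb2⟩ hab
            simp only at hab
            simp only [Set.mem_setOf_eq, dif_neg hv] at ha2 hb2
            have hav0 : a ≠ v0 := by intro h; subst h; simp at ha2
            have hbv0 : b ≠ v0 := by intro h; subst h; simp at hb2
            rw [dif_neg hav0, dif_neg hbv0] at hab
            exact congrArg Subtype.val hab

section Alpha
variable {V : Type*} [Fintype V] (T : SimpleGraph V) (s : ℕ)

lemma alphaSet_bddAbove : BddAbove {k | ∃ S : Finset V, S.card = k ∧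
    (∀ v ∈ S, (T.neighborSet v).ncard ≤ s) ∧ ∀ u ∈ S, ∀ v ∈ S, ¬ T.Adj u v} := by
  refine ⟨Fintype.card V, ?_⟩
  rintro m ⟨S, hS, -, -⟩
  rw [← hS, ← Finset.card_univ]
  exact Finset.card_le_univ S

lemma alphaSet_zero_mem : 0 ∈ {k | ∃ S : Finset V, S.card = k ∧
    (∀ v ∈ S, (T.neighborSet v).ncard ≤ s) ∧ ∀ u ∈ S, ∀ v ∈ S, ¬ T.Adj u v} :=
  ⟨∅, by simp⟩

lemma le_alphaDeg {m : ℕ} (h : m ∈ {k | ∃ S : Finset V, S.card = k ∧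
    (∀ v ∈ S, (T.neighborSet v).ncard ≤ s) ∧ ∀ u ∈ S, ∀ v ∈ S, ¬ T.Adj u v}) :
    m ≤ alphaDeg T s :=
  le_csSup (alphaSet_bddAbove T s) h

lemma alphaDeg_mem : alphaDeg T s ∈ {k | ∃ S : Finset V, S.card = k ∧
    (∀ v ∈ S, (T.neighborSet v).ncard ≤ s) ∧ ∀ u ∈ S, ∀ v ∈ S, ¬ T.Adj u v} :=
  Nat.sSup_mem ⟨0, alphaSet_zero_mem T s⟩ (alphaSet_bddAbove T s)

lemma alphaDeg_le_card : alphaDeg T s ≤ Fintype.card V := by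
  obtain ⟨S, hS, -, -⟩ := alphaDeg_mem T s
  rw [← hS, ← Finset.card_univ]
  exact Finset.card_le_univ S

end Alpha

instance subgraphFinite {V : Type*} [Finite V] (G : SimpleGraph V) : Finite G.Subgraph := by
  have h : Function.Injective (fun H : G.Subgraph => (H.verts, H.Adj)) := by
    intro a b hab
    exact SimpleGraph.Subgraph.ext (congrArg Prod.fst hab) (congrArg Prod.snd hab)
  exact Finite.of_injective _ h

lemma nat_card_sigma {ι : Type*} [Fintype ι] (f : ι → Type*) [∀ i, Finite (f i)] :
    Nat.card (Σ i, f i) = ∑ i, Nat.card (f i) := by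
  classical
  letI : ∀ i, Fintype (f i) := fun i => Fintype.ofFinite _
  simp [Nat.card_eq_fintype_card, Fintype.card_sigma]

/-- injective homomorphism predicate -/
def InjHom {VT VG : Type*} (T : SimpleGraph VT) (G : SimpleGraph VG) (φ : VT → VG) : Prop :=
  (∀ a b, T.Adj a b → G.Adj (φ a) (φ b)) ∧ Function.Injective φ

lemma numCopies_le_injHoms {VT VG : Type*} [Fintype VT] [Finite VG] (T : SimpleGraph VT)
    (G : SimpleGraph VG) :
    numCopies T G ≤ Nat.card {φ : VT → VG // InjHom T G φ} := by
  classical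
  rw [numCopies]
  refine Nat.card_le_card_of_injective
    (fun p => ⟨fun a => ((Classical.choice p.2).symm a).1, ?_, ?_⟩) ?_
  · intro a b hab
    exact ((Classical.choice p.2).symm.map_adj_iff.mpr hab).adj_sub
  · intro a b hab
    have := Subtype.val_injective hab
    exact (Classical.choice p.2).symm.injective this
  · rintro ⟨G₁, h₁⟩ ⟨G₂, h₂⟩ hF
    have hF' := congrArg Subtype.val hF
    simp only at hF'
    set e₁ := Classical.choice h₁
    set e₂ := Classical.choice h₂
    set φ : VT → VG := fun a => ((e₁.symm a) : VG) with hφ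
    have hφ₂ : (fun a => ((e₂.symm a) : VG)) = φ := hF'.symm
    have hverts : ∀ (Gi : G.Subgraph) (e : Gi.coe ≃g T), Gi.verts = Set.range
        (fun a => ((e.symm a) : VG)) := by
      intro Gi e
      ext x
      constructor
      · intro hx
        exact ⟨e ⟨x, hx⟩, by simp⟩
      · rintro ⟨a, rfl⟩
        exact (e.symm a).2
    have hadj : ∀ (Gi : G.Subgraph) (e : Gi.coe ≃g T) (x y : VG), Gi.Adj x y ↔
        ∃ a b, T.Adj a b ∧ ((e.symm a) : VG) = x ∧ ((e.symm b) : VG) = y := by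
      intro Gi e x y
      constructor
      · intro hxy
        refine ⟨e ⟨x, hxy.fst_mem⟩, e ⟨y, hxy.snd_mem⟩, ?_, by simp, by simp⟩
        exact e.map_adj_iff.mpr hxy
      · rintro ⟨a, b, hab, rfl, rfl⟩
        have : Gi.coe.Adj (e.symm a) (e.symm b) := e.symm.map_adj_iff.mpr hab
        exact this
    apply Subtype.ext
    apply SimpleGraph.Subgraph.ext
    · rw [hverts G₁ e₁, hverts G₂ e₂, hφ₂]
    · ext x y
      rw [hadj G₁ e₁ x y, hadj G₂ e₂ x y]
      have h3 : ∀ a, ((e₂.symm a) : VG) = φ a := fun a => congrFun hφ₂ a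
      have h4 : ∀ a, ((e₁.symm a) : VG) = φ a := fun a => rfl
      simp only [h3, h4]

section Upper
variable {VT VG : Type} [Fintype VT] [Fintype VG] (T : SimpleGraph VT) (G : SimpleGraph VG)

lemma exists_compat_equiv (r : VG → ℕ) (hrinj : Function.Injective r) (φ : VT → VG)
    (hφ : Function.Injective φ) :
    ∃ π : VT ≃ Fin (Fintype.card VT), ∀ a b, π a < π b ↔ r (φ a) < r (φ b) := by
  letI L : LinearOrder VT := LinearOrder.lift' (r ∘ φ) (hrinj.comp hφ)
  let oi := monoEquivOfFin VT rfl
  refine ⟨oi.symm.toEquiv, fun a b => ?_⟩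
  have h1 : oi.symm a < oi.symm b ↔ a < b := oi.symm.lt_iff_lt
  exact h1

lemma perPi_card_le (k : ℕ) (hk : 1 ≤ k) (r : VG → ℕ)
    (hr : ∀ v, (G.neighborSet v ∩ {w | r v < r w}).ncard ≤ k)
    (π : VT ≃ Fin (Fintype.card VT)) :
    Nat.card {φ : VT → VG // InjHom T G φ ∧ ∀ a b, π a < π b ↔ r (φ a) < r (φ b)}
      ≤ Fintype.card VG ^ Nat.card {v : VT // ∀ u, T.Adj u v → π v < π u}
        * k ^ Fintype.card VT := by
  classical
  have hkpos : 0 < k := hk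
  have hcode : ∀ w : VG, ∃ f : VG → Fin k,
      Set.InjOn f (G.neighborSet w ∩ {u | r w < r u}) := by
    intro w
    have h1 : Fintype.card (G.neighborSet w ∩ {u | r w < r u} : Set VG) ≤ Fintype.card (Fin k) := by
      rw [Fintype.card_fin, ← Nat.card_eq_fintype_card, Nat.card_coe_set_eq]
      exact hr w
    obtain ⟨e⟩ := Function.Embedding.nonempty_of_card_le h1
    refine ⟨fun x => if hx : x ∈ (G.neighborSet w ∩ {u | r w < r u}) then e ⟨x, hx⟩
      else ⟨0, hkpos⟩, ?_⟩
    intro a ha b hb hab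
    simp only at hab
    rw [dif_pos ha, dif_pos hb] at hab
    have := e.injective hab
    exact congrArg Subtype.val this
  choose code hcodespec using hcode
  have hpar : ∀ v : VT, ¬(∀ u, T.Adj u v → π v < π u) → ∃ u, T.Adj u v ∧ π u < π v := by
    intro v hv
    push_neg at hv
    obtain ⟨u, hu, hle⟩ := hv
    refine ⟨u, hu, lt_of_le_of_ne hle ?_⟩
    intro h
    exact hu.ne (π.injective h)
  choose par hpar1 hpar2 using hpar
  set F : {φ : VT → VG // InjHom T G φ ∧ ∀ a b, π a < π b ↔ r (φ a) < r (φ b)} →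
      ({v : VT // ∀ u, T.Adj u v → π v < π u} → VG) × (VT → Fin k) :=
    fun φh => (fun v => φh.1 v.1,
      fun v => if h : ∀ u, T.Adj u v → π v < π u then ⟨0, hkpos⟩
        else code (φh.1 (par v h)) (φh.1 v)) with hF
  have hFinj : Function.Injective F := by
    rintro ⟨φ, hφ, hcφ⟩ ⟨ψ, hψ, hcψ⟩ hFeq
    apply Subtype.ext
    funext v
    have key : ∀ m : ℕ, ∀ v : VT, (π v : ℕ) = m → φ v = ψ v := by
      intro m
      induction m using Nat.strong_induction_on with
      | _ m IH =>
        intro v hv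
        by_cases hs : ∀ u, T.Adj u v → π v < π u
        · have h1 := congrFun (congrArg Prod.fst hFeq) ⟨v, hs⟩
          exact h1
        · have hu := hpar1 v hs
          have hlt := hpar2 v hs
          have huv : φ (par v hs) = ψ (par v hs) := by
            refine IH (π (par v hs)) ?_ (par v hs) rfl
            rw [← hv]
            exact hlt
          have hd := congrFun (congrArg Prod.snd hFeq) v
          simp only [hF] at hd
          rw [dif_neg hs, dif_neg hs] at hd
          rw [← huv] at hd
          have hmem1 : φ v ∈ G.neighborSet (φ (par v hs)) ∩ {x | r (φ (par v hs)) < r x} :=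
            ⟨hφ.1 _ _ hu, (hcφ _ _).mp hlt⟩
          have hmem2 : ψ v ∈ G.neighborSet (φ (par v hs)) ∩ {x | r (φ (par v hs)) < r x} := by
            rw [huv]
            exact ⟨hψ.1 _ _ hu, (hcψ _ _).mp hlt⟩
          exact hcodespec (φ (par v hs)) hmem1 hmem2 hd
    exact key (π v) v rfl
  calc Nat.card {φ : VT → VG // InjHom T G φ ∧ ∀ a b, π a < π b ↔ r (φ a) < r (φ b)}
      ≤ Nat.card (({v : VT // ∀ u, T.Adj u v → π v < π u} → VG) × (VT → Fin k)) :=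
        Nat.card_le_card_of_injective F hFinj
    _ = Fintype.card VG ^ Nat.card {v : VT // ∀ u, T.Adj u v → π v < π u}
        * k ^ Fintype.card VT := by
        rw [Nat.card_prod, Nat.card_fun, Nat.card_fun]
        rw [Nat.card_eq_fintype_card (α := VG), Nat.card_eq_fintype_card (α := Fin k),
          Nat.card_eq_fintype_card (α := VT), Fintype.card_fin]

lemma srcCard_le_alpha (k : ℕ) (r : VG → ℕ)
    (hr : ∀ v, (G.neighborSet v ∩ {w | r v < r w}).ncard ≤ k)
    (π : VT ≃ Fin (Fintype.card VT)) (φ : VT → VG)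
    (hφ : InjHom T G φ) (hc : ∀ a b, π a < π b ↔ r (φ a) < r (φ b)) :
    Nat.card {v : VT // ∀ u, T.Adj u v → π v < π u} ≤ alphaDeg T k := by
  classical
  apply le_alphaDeg
  refine ⟨Finset.univ.filter (fun v => ∀ u, T.Adj u v → π v < π u), ?_, ?_, ?_⟩
  · rw [Nat.card_eq_fintype_card, Fintype.card_subtype]
  · intro v hv
    rw [Finset.mem_filter] at hv
    refine le_trans (Set.ncard_le_ncard_of_injOn (fun u => φ u) ?_ ?_) (hr (φ v))
    · intro u hu
      rw [SimpleGraph.mem_neighborSet] at hu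
      refine ⟨hφ.1 v u hu, ?_⟩
      have h1 := hv.2 u hu.symm
      exact (hc v u).mp h1
    · exact fun a _ b _ h => hφ.2 h
  · intro u hu v hv hadj
    rw [Finset.mem_filter] at hu hv
    exact lt_asymm (hu.2 v hadj.symm) (hv.2 u hadj)

end Upper

theorem upper_bound (k : ℕ) (hk : 1 ≤ k) {VT : Type} [Fintype VT] (T : SimpleGraph VT)
    (VG : Type) [Finite VG] (G : SimpleGraph VG) (hG : Degenerate k G) :
    numCopies T G ≤ Nat.card (VT ≃ Fin (Fintype.card VT)) *
      (k ^ Fintype.card VT * Nat.card VG ^ alphaDeg T k) := by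
  classical
  letI := Fintype.ofFinite VG
  letI : Fintype (VT ≃ Fin (Fintype.card VT)) := Fintype.ofFinite _
  obtain ⟨r, hrinj, hr⟩ := exists_degeneracy_order k (Fintype.card VG) VG G rfl hG
  set t := Fintype.card VT with ht
  set A : (VT ≃ Fin t) → Type := fun π =>
    {φ : VT → VG // InjHom T G φ ∧ ∀ a b, π a < π b ↔ r (φ a) < r (φ b)} with hA
  have step1 := numCopies_le_injHoms T G
  have step2 : Nat.card {φ : VT → VG // InjHom T G φ} ≤ Nat.card (Σ π : VT ≃ Fin t, A π) := by
    have hex : ∀ φh : {φ : VT → VG // InjHom T G φ}, ∃ π : VT ≃ Fin t,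
        ∀ a b, π a < π b ↔ r (φh.1 a) < r (φh.1 b) :=
      fun φh => exists_compat_equiv r hrinj φh.1 φh.2.2
    choose P0 hP0 using hex
    apply Nat.card_le_card_of_injective
      (fun φh => (⟨P0 φh, ⟨φh.1, φh.2, hP0 φh⟩⟩ : Σ π : VT ≃ Fin t, A π))
    intro a b h
    have h2 := congrArg (fun p : (Σ π : VT ≃ Fin t, A π) => p.2.1) h
    exact Subtype.ext h2
  have step3 : Nat.card (Σ π : VT ≃ Fin t, A π) = ∑ π : VT ≃ Fin t, Nat.card (A π) :=
    nat_card_sigma A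
  have step4 : ∀ π : VT ≃ Fin t, Nat.card (A π) ≤ k ^ t * Nat.card VG ^ alphaDeg T k := by
    intro π
    rcases isEmpty_or_nonempty (A π) with hA0 | hA1
    · rw [Nat.card_of_isEmpty]
      exact Nat.zero_le _
    · obtain ⟨⟨φ, hφ, hcφ⟩⟩ := hA1
      have hs := srcCard_le_alpha T G k r hr π φ hφ hcφ
      have hb := perPi_card_le T G k hk r hr π
      have hmono : Fintype.card VG ^ Nat.card {v : VT // ∀ u, T.Adj u v → π v < π u}
          ≤ Nat.card VG ^ alphaDeg T k := by
        rw [Nat.card_eq_fintype_card (α := VG)]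
        rcases Nat.eq_zero_or_pos (Fintype.card VG) with h0 | hp
        · have hVG : IsEmpty VG := Fintype.card_eq_zero_iff.mp h0
          have hVT : IsEmpty VT := ⟨fun v => (hVG.false (φ v))⟩
          have hsrc0 : Nat.card {v : VT // ∀ u, T.Adj u v → π v < π u} = 0 := by
            rw [Nat.card_eq_fintype_card]
            exact Fintype.card_eq_zero_iff.mpr ⟨fun v => hVT.false v.1⟩
          have halpha0 : alphaDeg T k = 0 := by
            haveI := hVT
            have h5 := alphaDeg_le_card T k
            have h6 : Fintype.card VT = 0 := Fintype.card_eq_zero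
            exact Nat.le_antisymm (h6 ▸ h5) (Nat.zero_le _)
          rw [hsrc0, halpha0]
        · exact Nat.pow_le_pow_right hp hs
      calc Nat.card (A π) ≤ Fintype.card VG ^ Nat.card {v : VT // ∀ u, T.Adj u v → π v < π u}
            * k ^ t := hb
        _ ≤ Nat.card VG ^ alphaDeg T k * k ^ t := Nat.mul_le_mul hmono le_rfl
        _ = k ^ t * Nat.card VG ^ alphaDeg T k := Nat.mul_comm _ _
  have step5 : (∑ π : VT ≃ Fin t, Nat.card (A π)) ≤
      Nat.card (VT ≃ Fin t) * (k ^ t * Nat.card VG ^ alphaDeg T k) := by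
    calc (∑ π : VT ≃ Fin t, Nat.card (A π))
        ≤ ∑ _π : VT ≃ Fin t, (k ^ t * Nat.card VG ^ alphaDeg T k) :=
          Finset.sum_le_sum (fun π _ => step4 π)
      _ = Nat.card (VT ≃ Fin t) * (k ^ t * Nat.card VG ^ alphaDeg T k) := by
          simp [Nat.card_eq_fintype_card, Finset.card_univ]
  exact le_trans step1 (le_trans step2 (le_trans (le_of_eq step3) step5))

theorem lower_construction (k : ℕ) (hk : 1 ≤ k) {VT : Type} [Fintype VT]
    (T : SimpleGraph VT) (hT : T.IsAcyclic) (S : Finset VT)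
    (hdeg : ∀ v ∈ S, (T.neighborSet v).ncard ≤ k)
    (hstab : ∀ u ∈ S, ∀ v ∈ S, ¬ T.Adj u v)
    (m p : ℕ) :
    ∃ (VG : Type) (_ : Finite VG) (G : SimpleGraph VG), Degenerate k G ∧
      Nat.card VG = (Fintype.card VT - S.card) + S.card * m + p ∧
      m ^ S.card ≤ numCopies T G := by
  classical
  set CoreT : Type := {v : VT // v ∉ S} ⊕ ({v : VT // v ∈ S} × Fin m) with hCoreT
  set VG : Type := CoreT ⊕ Fin p with hVG
  set cm : CoreT → VT := Sum.elim (fun a => a.1) (fun q => q.1.1) with hcm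
  set Adj : VG → VG → Prop := fun x y =>
    match x, y with
    | Sum.inl a, Sum.inl b => T.Adj (cm a) (cm b)
    | _, _ => False with hAdj
  have hAdj_cases : ∀ x y, Adj x y → ∃ a b, x = Sum.inl a ∧ y = Sum.inl b ∧
      T.Adj (cm a) (cm b) := by
    rintro (a | i) (b | j) h
    · exact ⟨a, b, rfl, rfl, h⟩
    · exact absurd h (by simp [hAdj])
    · exact absurd h (by simp [hAdj])
    · exact absurd h (by simp [hAdj])
  set G : SimpleGraph VG :=
    { Adj := Adj
      symm := by
        constructor; rintro (a | i) (b | j) h <;> simp only [hAdj] at h ⊢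
        · exact h.symm
      loopless := by
        constructor; rintro (a | i) h <;> simp only [hAdj] at h
        exact T.irrefl h } with hG
  have hGadj : ∀ a b : CoreT, G.Adj (Sum.inl a) (Sum.inl b) ↔ T.Adj (cm a) (cm b) := by
    intro a b; rfl
  have hGAdj_cases : ∀ x y, G.Adj x y → ∃ a b, x = Sum.inl a ∧ y = Sum.inl b ∧
      T.Adj (cm a) (cm b) := by
    intro x y h
    rw [hG] at h
    exact hAdj_cases x y h
  refine ⟨VG, inferInstance, G, ?_, ?_, ?_⟩
  -- Degenerate
  · intro s hs
    by_cases h1 : ∃ j : Fin p, Sum.inr j ∈ s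
    · obtain ⟨j, hj⟩ := h1
      refine ⟨Sum.inr j, hj, ?_⟩
      have he : G.neighborSet (Sum.inr j) = ∅ := Set.eq_empty_iff_forall_notMem.mpr (by
        intro y h
        rw [mem_neighborSet] at h
        obtain ⟨a, b, ha, -, -⟩ := hGAdj_cases _ _ h
        simp at ha)
      rw [he, Set.empty_inter, Set.ncard_empty]
      exact Nat.zero_le _
    · by_cases h2 : ∃ q, Sum.inl (Sum.inr q) ∈ s
      · obtain ⟨q, hq⟩ := h2
        refine ⟨Sum.inl (Sum.inr q), hq, ?_⟩
        have hq1 : q.1.1 ∈ S := q.1.2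
        refine le_trans ?_ (hdeg q.1.1 hq1)
        apply Set.ncard_le_ncard_of_injOn
          (fun y => match y with | Sum.inl (Sum.inl b) => b.1 | _ => q.1.1)
        · rintro y ⟨hy1, hy2⟩
          rw [mem_neighborSet] at hy1
          obtain ⟨a, b, ha, hb, hadj⟩ := hGAdj_cases _ _ hy1
          cases ha
          subst hb
          match b with
          | Sum.inl b' =>
            simpa [hcm] using hadj
          | Sum.inr q' =>
            exact absurd hadj (hstab q.1.1 hq1 q'.1.1 q'.1.2)
        · rintro y ⟨hy1, hy2⟩ z ⟨hz1, hz2⟩ hyz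
          rw [mem_neighborSet] at hy1 hz1
          obtain ⟨a, b, ha, hb, hadj⟩ := hGAdj_cases _ _ hy1
          obtain ⟨a', b', ha', hb', hadj'⟩ := hGAdj_cases _ _ hz1
          cases ha; cases ha'; subst hb; subst hb'
          match b, b' with
          | Sum.inl y', Sum.inl z' =>
            simp only at hyz
            exact congrArg (fun w => (Sum.inl (Sum.inl w) : VG)) (Subtype.ext hyz)
          | Sum.inl y', Sum.inr q' =>
            exact absurd hadj' (hstab q.1.1 hq1 q'.1.1 q'.1.2)
          | Sum.inr q', _ =>
            exact absurd hadj (hstab q.1.1 hq1 q'.1.1 q'.1.2)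
      · -- all of s is inl ∘ inl
        set s' : Set VT := {a : VT | ∃ h : a ∉ S, Sum.inl (Sum.inl ⟨a, h⟩) ∈ s} with hs'
        have hs'ne : s'.Nonempty := by
          obtain ⟨x, hx⟩ := hs
          match x with
          | Sum.inr j => exact absurd ⟨j, hx⟩ h1
          | Sum.inl (Sum.inr q) => exact absurd ⟨q, hx⟩ h2
          | Sum.inl (Sum.inl a) => exact ⟨a.1, a.2, by simpa using hx⟩
        obtain ⟨v, hvs', hvcard⟩ := forest_one_degenerate hT s' hs'ne
        obtain ⟨hvS, hvmem⟩ := hvs'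
        refine ⟨Sum.inl (Sum.inl ⟨v, hvS⟩), hvmem, le_trans ?_ (le_trans hvcard hk)⟩
        apply Set.ncard_le_ncard_of_injOn
          (fun y => match y with | Sum.inl (Sum.inl b) => b.1 | _ => v)
        · rintro y ⟨hy1, hy2⟩
          rw [mem_neighborSet] at hy1
          obtain ⟨a, b, ha, hb, hadj⟩ := hGAdj_cases _ _ hy1
          cases ha
          subst hb
          match b with
          | Sum.inl b' =>
            refine ⟨by simpa [hcm] using hadj, b'.2, by simpa using hy2⟩
          | Sum.inr q' =>
            exact absurd ⟨q', hy2⟩ h2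
        · rintro y ⟨hy1, hy2⟩ z ⟨hz1, hz2⟩ hyz
          rw [mem_neighborSet] at hy1 hz1
          obtain ⟨a, b, ha, hb, hadj⟩ := hGAdj_cases _ _ hy1
          obtain ⟨a', b', ha', hb', hadj'⟩ := hGAdj_cases _ _ hz1
          cases ha; cases ha'; subst hb; subst hb'
          match b, b' with
          | Sum.inl y', Sum.inl z' =>
            simp only at hyz
            exact congrArg (fun w => (Sum.inl (Sum.inl w) : VG)) (Subtype.ext hyz)
          | Sum.inl y', Sum.inr q' => exact absurd ⟨q', hz2⟩ h2
          | Sum.inr q', _ => exact absurd ⟨q', hy2⟩ h2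
  -- cardinality
  · rw [Nat.card_eq_fintype_card]
    simp [hVG, hCoreT, Fintype.card_sum, Fintype.card_prod, Fintype.card_fin,
      Fintype.card_subtype_compl, Fintype.card_coe]
  -- copy count
  · set ι : ({v : VT // v ∈ S} → Fin m) → VT → VG := fun f v =>
      if h : v ∈ S then Sum.inl (Sum.inr (⟨v, h⟩, f ⟨v, h⟩)) else Sum.inl (Sum.inl ⟨v, h⟩)
      with hι
    have hvalS : ∀ f v (h : v ∈ S), ι f v = Sum.inl (Sum.inr (⟨v, h⟩, f ⟨v, h⟩)) := by
      intro f v h; rw [hι]; exact dif_pos h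
    have hvalN : ∀ f v (h : v ∉ S), ι f v = Sum.inl (Sum.inl ⟨v, h⟩) := by
      intro f v h; rw [hι]; exact dif_neg h
    have hιinj : ∀ f, Function.Injective (ι f) := by
      intro f a b hab
      by_cases ha : a ∈ S <;> by_cases hb : b ∈ S
      · rw [hvalS f a ha, hvalS f b hb] at hab
        injection hab with h1
        injection h1 with h2
        injection h2 with h3 h4
        injection h3
      · rw [hvalS f a ha, hvalN f b hb] at hab
        injection hab with h1
        injection h1
      · rw [hvalN f a ha, hvalS f b hb] at hab
        injection hab with h1
        injection h1
      · rw [hvalN f a ha, hvalN f b hb] at hab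
        injection hab with h1
        injection h1 with h2
        injection h2
    have hcore : ∀ f v, ∃ c : CoreT, ι f v = Sum.inl c ∧ cm c = v := by
      intro f v
      by_cases h : v ∈ S
      · exact ⟨Sum.inr (⟨v, h⟩, f ⟨v, h⟩), hvalS f v h, rfl⟩
      · exact ⟨Sum.inl ⟨v, h⟩, hvalN f v h, rfl⟩
    have hιhom : ∀ f a b, T.Adj a b → G.Adj (ι f a) (ι f b) := by
      intro f a b hab
      obtain ⟨ca, hca, hcma⟩ := hcore f a
      obtain ⟨cb, hcb, hcmb⟩ := hcore f b
      rw [hca, hcb, hGadj, hcma, hcmb]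
      exact hab
    set Sub : ({v : VT // v ∈ S} → Fin m) → G.Subgraph := fun f =>
      { verts := Set.range (ι f)
        Adj := fun x y => ∃ a b, T.Adj a b ∧ ι f a = x ∧ ι f b = y
        adj_sub := by rintro x y ⟨a, b, hab, rfl, rfl⟩; exact hιhom f a b hab
        edge_vert := by rintro x y ⟨a, b, hab, rfl, rfl⟩; exact ⟨a, rfl⟩
        symm := by constructor; rintro x y ⟨a, b, hab, rfl, rfl⟩; exact ⟨b, a, hab.symm, rfl, rfl⟩ }
      with hSub
    have hiso : ∀ f, Nonempty ((Sub f).coe ≃g T) := by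
      intro f
      refine ⟨⟨(Equiv.ofInjective (ι f) (hιinj f)).symm, ?_⟩⟩
      intro x y
      constructor
      · intro h
        exact ⟨(Equiv.ofInjective (ι f) (hιinj f)).symm x,
          (Equiv.ofInjective (ι f) (hιinj f)).symm y, h,
          Equiv.apply_ofInjective_symm (hιinj f) x,
          Equiv.apply_ofInjective_symm (hιinj f) y⟩
      · rintro ⟨a, b, hab, hxa, hyb⟩
        have hx : (Equiv.ofInjective (ι f) (hιinj f)).symm x = a := by
          apply hιinj f
          rw [Equiv.apply_ofInjective_symm (hιinj f) x, hxa]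
        have hy : (Equiv.ofInjective (ι f) (hιinj f)).symm y = b := by
          apply hιinj f
          rw [Equiv.apply_ofInjective_symm (hιinj f) y, hyb]
        rw [hx, hy]
        exact hab
    have hSubinj : Function.Injective Sub := by
      intro f₁ f₂ h
      funext sv
      have hv : Sum.inl (Sum.inr (sv, f₁ sv)) ∈ (Sub f₂).verts := by
        rw [← h]
        refine ⟨sv.1, ?_⟩
        rw [hvalS f₁ sv.1 sv.2]
      obtain ⟨a, ha⟩ := hv
      by_cases haS : a ∈ S
      · rw [hvalS f₂ a haS] at ha
        injection ha with h1
        injection h1 with h2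
        injection h2 with h3 h4
        rw [h3] at h4
        exact h4.symm
      · rw [hvalN f₂ a haS] at ha
        injection ha with h1
        injection h1
    calc m ^ S.card = Nat.card ({v : VT // v ∈ S} → Fin m) := by
          rw [Nat.card_fun, Nat.card_eq_fintype_card, Nat.card_eq_fintype_card,
            Fintype.card_fin]
          congr 1
          exact (Fintype.card_coe S).symm
      _ ≤ numCopies T G := by
          rw [numCopies]
          apply Nat.card_le_card_of_injective (fun f => ⟨Sub f, hiso f⟩)
          intro f₁ f₂ hf
          exact hSubinj (congrArg Subtype.val hf)

/-- `C(T, 𝓓_k, n) ∈ Θ(n^{α_k(T)})` for every fixed forest `T`. -/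
theorem stmt11 {VT : Type} [Fintype VT] (k : ℕ) (hk : 1 ≤ k)
    (T : SimpleGraph VT) (hT : T.IsAcyclic) :
    ∃ c₁ c₂ : ℝ, 0 < c₁ ∧ 0 < c₂ ∧ ∃ N : ℕ,
      (∀ n : ℕ, N ≤ n → ∃ (VG : Type) (_ : Finite VG) (G : SimpleGraph VG),
        Degenerate k G ∧ Nat.card VG = n ∧
        c₁ * (n : ℝ) ^ (alphaDeg T k) ≤ (numCopies T G : ℝ)) ∧
      (∀ (VG : Type) (G : SimpleGraph VG), Finite VG → Degenerate k G →
        (numCopies T G : ℝ) ≤ c₂ * (Nat.card VG : ℝ) ^ (alphaDeg T k)) := by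
  classical
  refine ⟨((2 * alphaDeg T k + 2 : ℝ))⁻¹ ^ alphaDeg T k,
    (Nat.card (VT ≃ Fin (Fintype.card VT)) * k ^ Fintype.card VT : ℝ), ?_, ?_,
    4 * Fintype.card VT + 4, ?_, ?_⟩
  · positivity
  · have h1 : 0 < Nat.card (VT ≃ Fin (Fintype.card VT)) := by
      have : Nonempty (VT ≃ Fin (Fintype.card VT)) := ⟨Fintype.equivFin VT⟩
      exact Nat.card_pos
    have h2 : (0:ℝ) < (k:ℝ) ^ Fintype.card VT := by
      have : (0:ℝ) < (k:ℝ) := by exact_mod_cast hk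
      positivity
    have h1' : (0:ℝ) < (Nat.card (VT ≃ Fin (Fintype.card VT)) : ℝ) := by exact_mod_cast h1
    calc (0:ℝ) < _ * _ := mul_pos h1' h2
      _ = _ := by push_cast; ring
  · -- lower bound
    intro n hn
    obtain ⟨S, hScard, hSdeg, hSstab⟩ := alphaDeg_mem T k
    have hαt : alphaDeg T k ≤ Fintype.card VT := alphaDeg_le_card T k
    obtain ⟨VG, hFin, G, hdeg, hcard, hcount⟩ := lower_construction k hk T hT S hSdeg hSstab
      ((n - Fintype.card VT) / alphaDeg T k)
      (n - ((Fintype.card VT - S.card) +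
        S.card * ((n - Fintype.card VT) / alphaDeg T k)))
    have h1 : alphaDeg T k * ((n - Fintype.card VT) / alphaDeg T k) ≤ n - Fintype.card VT := by
      rw [Nat.mul_comm]
      exact Nat.div_mul_le_self _ _
    refine ⟨VG, hFin, G, hdeg, ?_, ?_⟩
    · rw [hcard, hScard]
      omega
    · rw [hScard] at hcount
      rcases Nat.eq_zero_or_pos (alphaDeg T k) with hα0 | hαpos
      · rw [hα0] at hcount ⊢
        simp only [pow_zero, mul_one, one_mul]
        have : 1 ≤ numCopies T G := by simpa using hcount
        exact_mod_cast this
      · have hdm := Nat.div_add_mod (n - Fintype.card VT) (alphaDeg T k)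
        have hmod : (n - Fintype.card VT) % alphaDeg T k < alphaDeg T k :=
          Nat.mod_lt _ hαpos
        have hkey : n ≤ (2 * alphaDeg T k + 2) * ((n - Fintype.card VT) / alphaDeg T k) := by
          have hexp : (2 * alphaDeg T k + 2) * ((n - Fintype.card VT) / alphaDeg T k)
              = 2 * (alphaDeg T k * ((n - Fintype.card VT) / alphaDeg T k))
                + 2 * ((n - Fintype.card VT) / alphaDeg T k) := by ring
          omega
        have hc2pos : (0:ℝ) < 2 * (alphaDeg T k : ℝ) + 2 := by positivity
        have hle : (n : ℝ) / (2 * (alphaDeg T k : ℝ) + 2)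
            ≤ ((n - Fintype.card VT) / alphaDeg T k : ℕ) := by
          rw [div_le_iff₀ hc2pos]
          calc (n:ℝ) ≤ (((2 * alphaDeg T k + 2) * ((n - Fintype.card VT) / alphaDeg T k) : ℕ) : ℝ) := by
                exact_mod_cast hkey
            _ = (((n - Fintype.card VT) / alphaDeg T k : ℕ) : ℝ)
                * (2 * (alphaDeg T k : ℝ) + 2) := by push_cast; ring
        calc ((2 * (alphaDeg T k : ℝ) + 2))⁻¹ ^ alphaDeg T k * (n:ℝ) ^ alphaDeg T k
            = ((n:ℝ) / (2 * (alphaDeg T k : ℝ) + 2)) ^ alphaDeg T k := by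
              rw [div_eq_mul_inv, mul_pow]; ring
          _ ≤ (((n - Fintype.card VT) / alphaDeg T k : ℕ) : ℝ) ^ alphaDeg T k := by
              apply pow_le_pow_left₀ (by positivity) hle
          _ ≤ (numCopies T G : ℝ) := by exact_mod_cast hcount
  · -- upper bound
    intro VG G hFin hG
    haveI := hFin
    have hub := upper_bound k hk T VG G hG
    calc (numCopies T G : ℝ)
        ≤ ((Nat.card (VT ≃ Fin (Fintype.card VT)) *
            (k ^ Fintype.card VT * Nat.card VG ^ alphaDeg T k) : ℕ) : ℝ) := by
          exact_mod_cast hub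
      _ = (Nat.card (VT ≃ Fin (Fintype.card VT)) * k ^ Fintype.card VT : ℝ)
          * (Nat.card VG : ℝ) ^ alphaDeg T k := by push_cast; ring
end

section
/- Fix s, t, k, d, q ∈ ℕ and let t' := (2d(k-1)(s+q-1)+1)(t-1)+1+sd. Let 𝓟 be a (k,d)*-shortcut system for a graph G and let G^𝓟 be the supergraph of G obtained by adding an edge vw for each vw-shortcut in 𝓟. If G^𝓟 contains a (1,q)-model of K_{s,t'}, then G contains a (1, q+(k-1)(s+q-1))-model of K_{s,t}. -/
open SimpleGraph

/-- `x` is an internal vertex of the walk `w` from `u` to `v`. -/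
def InternalVertex {V : Type*} {G : SimpleGraph V} {u v : V} (w : G.Walk u v) (x : V) : Prop :=
  x ∈ w.support ∧ x ≠ u ∧ x ≠ v

/-- `P` is a `(k,d)*`-shortcut system for `G`: a set of non-trivial paths of length at most `k`,
such that for every vertex `v`, the set `M_v` of endpoints of shortcuts having `v` as an
internal vertex has size at most `d`. -/
def IsKDStarShortcutSystem {V : Type*} (G : SimpleGraph V)
    (P : Set (Σ u : V, Σ v : V, G.Walk u v)) (k d : ℕ) : Prop :=
  (∀ p ∈ P, p.2.2.IsPath ∧ 1 ≤ p.2.2.length ∧ p.2.2.length ≤ k) ∧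
  (∀ x : V, {u : V | ∃ p ∈ P, InternalVertex p.2.2 x ∧ (u = p.1 ∨ u = p.2.1)}.ncard ≤ d)

/-- The graph `G^P` obtained from `G` by adding an edge `vw` for each `vw`-shortcut in `P`. -/
def shortcutGraph {V : Type*} (G : SimpleGraph V)
    (P : Set (Σ u : V, Σ v : V, G.Walk u v)) : SimpleGraph V :=
  SimpleGraph.fromRel (fun a b => G.Adj a b ∨ ∃ p ∈ P, p.1 = a ∧ p.2.1 = b)

/-- `G` contains a `(p,q)`-model of `K_{s,t}`. -/
def HasPQModel {V : Type*} (G : SimpleGraph V) (p q s t : ℕ) : Prop :=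
  ∃ (X : Fin s → Set V) (Y : Fin t → Set V),
    (∀ i, (G.induce (X i)).Connected ∧ (X i).ncard ≤ p) ∧
    (∀ j, (G.induce (Y j)).Connected ∧ (Y j).ncard ≤ q) ∧
    (∀ i i', i ≠ i' → Disjoint (X i) (X i')) ∧
    (∀ j j', j ≠ j' → Disjoint (Y j) (Y j')) ∧
    (∀ i j, Disjoint (X i) (Y j)) ∧
    (∀ i j, ∃ a ∈ X i, ∃ b ∈ Y j, G.Adj a b)

section Helpers

variable {V : Type} {G : SimpleGraph V}

/-- hom from induced graph to ambient graph -/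
def inducedHom (S : Set V) : (G.induce S) →g G :=
  ⟨Subtype.val, fun h => h⟩

lemma linked_of_induce_connected {S : Set V} (h : (G.induce S).Connected)
    {a b : V} (ha : a ∈ S) (hb : b ∈ S) :
    ∃ w : G.Walk a b, ∀ x ∈ w.support, x ∈ S := by
  obtain ⟨w⟩ := h.preconnected ⟨a, ha⟩ ⟨b, hb⟩
  refine ⟨w.map (inducedHom S), ?_⟩
  intro x hx
  have hx' : x ∈ (w.map (inducedHom S)).support := hx
  rw [Walk.support_map, List.mem_map] at hx'
  obtain ⟨y, -, rfl⟩ := hx'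
  exact y.2

lemma induce_connected_of_linked {S : Set V} (hne : S.Nonempty)
    (h : ∀ a ∈ S, ∀ b ∈ S, ∃ w : G.Walk a b, ∀ x ∈ w.support, x ∈ S) :
    (G.induce S).Connected := by
  have key : ∀ {a b : V} (w : G.Walk a b) (hw : ∀ x ∈ w.support, x ∈ S),
      (G.induce S).Reachable ⟨a, hw a w.start_mem_support⟩ ⟨b, hw b w.end_mem_support⟩ := by
    intro a b w
    induction w with
    | nil => intro _; rfl
    | cons hadj p ih =>
        intro hw
        have h1 : ∀ x ∈ p.support, x ∈ S := fun x hx => hw x (by simp [hx])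
        exact Reachable.trans (Adj.reachable (by exact hadj)) (ih h1)
  haveI : Nonempty S := ⟨⟨hne.choose, hne.choose_spec⟩⟩
  constructor
  rintro ⟨a, ha⟩ ⟨b, hb⟩
  obtain ⟨w, hw⟩ := h a ha b hb
  exact key w hw

lemma induce_singleton_connected (a : V) : (G.induce {a}).Connected := by
  haveI : Nonempty ({a} : Set V) := ⟨⟨a, rfl⟩⟩
  constructor
  rintro ⟨u, hu⟩ ⟨v, hv⟩
  simp only [Set.mem_singleton_iff] at hu hv
  subst hu; subst hv
  exact Reachable.refl _

/-- the set `M_v` -/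
def Mset (G : SimpleGraph V) (P : Set (Σ u : V, Σ v : V, G.Walk u v)) (x : V) : Set V :=
  {u : V | ∃ p ∈ P, InternalVertex p.2.2 x ∧ (u = p.1 ∨ u = p.2.1)}

variable {P : Set (Σ u : V, Σ v : V, G.Walk u v)} {k d : ℕ}

lemma internal_ncard_le {a b : V} (w : G.Walk a b) (hw : w.IsPath) (hab : a ≠ b)
    (hlen : w.length ≤ k) : {v | InternalVertex w v}.ncard ≤ k - 1 := by
  classical
  set F := w.support.toFinset with hF
  have hcard : F.card = w.length + 1 := by
    rw [hF, List.toFinset_card_of_nodup hw.support_nodup, Walk.length_support]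
  have hsub : {v | InternalVertex w v} ⊆ ↑(F \ {a, b}) := by
    intro v hv
    simp only [Finset.coe_sdiff, Set.mem_diff, Finset.coe_insert, Finset.coe_singleton]
    refine ⟨by simp [hF, hv.1], ?_⟩
    simp only [Set.mem_insert_iff, Set.mem_singleton_iff]
    push_neg
    exact hv.2
  calc {v | InternalVertex w v}.ncard ≤ (↑(F \ {a, b}) : Set V).ncard :=
        Set.ncard_le_ncard hsub (Set.toFinite _)
    _ = (F \ {a, b}).card := Set.ncard_coe_finset _
    _ ≤ k - 1 := by
        rw [Finset.card_sdiff_of_subset (by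
          intro x hx
          simp only [Finset.mem_insert, Finset.mem_singleton] at hx
          rcases hx with rfl | rfl <;> simp [hF])]
        have h2 : ({a, b} : Finset V).card = 2 := by
          rw [Finset.card_insert_of_notMem (by simpa using hab), Finset.card_singleton]
        omega

lemma shortcut_adj_iff {a b : V} :
    (shortcutGraph G P).Adj a b ↔ a ≠ b ∧
      ((G.Adj a b ∨ ∃ p ∈ P, p.1 = a ∧ p.2.1 = b) ∨
       (G.Adj b a ∨ ∃ p ∈ P, p.1 = b ∧ p.2.1 = a)) := by
  simp [shortcutGraph, fromRel_adj]

lemma expand_edge (hP : IsKDStarShortcutSystem G P k d) {a b : V}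
    (hadj : (shortcutGraph G P).Adj a b) :
    ∃ w : G.Walk a b, w.IsPath ∧
      (∀ v, InternalVertex w v → a ∈ Mset G P v ∧ b ∈ Mset G P v) ∧
      {v | InternalVertex w v}.ncard ≤ k - 1 := by
  rw [shortcut_adj_iff] at hadj
  obtain ⟨hab, hcases⟩ := hadj
  have edgecase : ∀ (h : G.Adj a b), ∃ w : G.Walk a b, w.IsPath ∧
      (∀ v, InternalVertex w v → a ∈ Mset G P v ∧ b ∈ Mset G P v) ∧
      {v | InternalVertex w v}.ncard ≤ k - 1 := by
    intro h
    refine ⟨Walk.cons h Walk.nil, by simp [h.ne], ?_, ?_⟩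
    · intro v hv
      obtain ⟨hsup, hva, hvb⟩ := hv
      simp only [Walk.support_cons, Walk.support_nil, List.mem_cons, List.mem_singleton] at hsup
      rcases hsup with rfl | rfl | h
      · exact absurd rfl hva
      · exact absurd rfl hvb
      · simp at h
    · have : {v | InternalVertex (Walk.cons h Walk.nil) v} = ∅ := by
        ext v
        simp only [Set.mem_setOf_eq, Set.mem_empty_iff_false, iff_false]
        rintro ⟨hsup, hva, hvb⟩
        simp only [Walk.support_cons, Walk.support_nil, List.mem_cons,
          List.mem_singleton, List.not_mem_nil, or_false] at hsup
        rcases hsup with rfl | rfl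
        · exact hva rfl
        · exact hvb rfl
      simp [this]
  rcases hcases with (h | ⟨p, hpP, ha, hb⟩) | (h | ⟨p, hpP, hb, ha⟩)
  · exact edgecase h
  · subst ha; subst hb
    obtain ⟨hpath, -, hlen⟩ := hP.1 p hpP
    refine ⟨p.2.2, hpath, ?_, internal_ncard_le _ hpath hab hlen⟩
    intro v hv
    exact ⟨⟨p, hpP, hv, Or.inl rfl⟩, ⟨p, hpP, hv, Or.inr rfl⟩⟩
  · exact edgecase h.symm
  · subst ha; subst hb
    obtain ⟨hpath, -, hlen⟩ := hP.1 p hpP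
    refine ⟨p.2.2.reverse, hpath.reverse, ?_, internal_ncard_le _ hpath.reverse hab
      (by rw [Walk.length_reverse]; exact hlen)⟩
    intro v hv
    have hv' : InternalVertex p.2.2 v := by
      obtain ⟨hsup, h1, h2⟩ := hv
      rw [Walk.support_reverse, List.mem_reverse] at hsup
      exact ⟨hsup, h2, h1⟩
    exact ⟨⟨p, hpP, hv', Or.inr rfl⟩, ⟨p, hpP, hv', Or.inl rfl⟩⟩

lemma span_exists [Finite V] {H : SimpleGraph V} {S : Set V} (hne : S.Nonempty)
    (hconn : ∀ a ∈ S, ∀ b ∈ S, ∃ w : H.Walk a b, ∀ x ∈ w.support, x ∈ S) :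
    ∃ E : Finset (V × V), E.card + 1 ≤ S.ncard ∧
      (∀ e ∈ E, H.Adj e.1 e.2 ∧ e.1 ∈ S ∧ e.2 ∈ S) ∧
      (∀ a ∈ S, ∀ b ∈ S,
        Relation.ReflTransGen (fun x y => ∃ e ∈ E, e = (x, y) ∨ e = (y, x)) a b) := by
  classical
  obtain ⟨r, hr⟩ := hne
  have hex : ∀ v ∈ S, ∃ m : ℕ, ∃ w : H.Walk r v, w.length = m ∧ ∀ x ∈ w.support, x ∈ S := by
    intro v hv
    obtain ⟨w, hw⟩ := hconn r hr v hv
    exact ⟨w.length, w, rfl, hw⟩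
  set n : V → ℕ := fun v => if hv : v ∈ S then Nat.find (hex v hv) else 0 with hn
  have hpar : ∀ v, v ∈ S → v ≠ r → ∃ u, u ∈ S ∧ H.Adj u v ∧ n u < n v := by
    intro v hv hvr
    obtain ⟨w, hwl, hws⟩ := Nat.find_spec (hex v hv)
    obtain ⟨c, hadj, p', hrev⟩ := SimpleGraph.Walk.exists_eq_cons_of_ne hvr w.reverse
    have hcS : c ∈ S := by
      apply hws
      have : c ∈ w.reverse.support := by rw [hrev]; simp
      rwa [Walk.support_reverse, List.mem_reverse] at this
    refine ⟨c, hcS, hadj.symm, ?_⟩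
    have hlen : p'.reverse.length + 1 = w.length := by
      have := congrArg Walk.length hrev
      rw [Walk.length_reverse] at this
      simp only [Walk.length_cons] at this
      rw [Walk.length_reverse]
      omega
    have hsupp : ∀ x ∈ p'.reverse.support, x ∈ S := by
      intro x hx
      apply hws
      rw [Walk.support_reverse, List.mem_reverse] at hx
      have : x ∈ w.reverse.support := by rw [hrev]; simp [hx]
      rwa [Walk.support_reverse, List.mem_reverse] at this
    have hnc : n c ≤ p'.reverse.length := by
      rw [hn]
      simp only [hcS, dif_pos]
      exact Nat.find_le ⟨p'.reverse, rfl, hsupp⟩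
    have hnv : n v = w.length := by rw [hn]; simp only [hv, dif_pos]; omega
    omega
  set par : V → V := fun v => if h : v ∈ S ∧ v ≠ r then (hpar v h.1 h.2).choose else v
    with hpardef
  set E : Finset (V × V) :=
    ((Set.toFinite S).toFinset.erase r).image (fun v => (par v, v)) with hE
  have hmem : ∀ v, v ∈ S → v ≠ r → par v ∈ S ∧ H.Adj (par v) v ∧ n (par v) < n v := by
    intro v hv hvr
    have h : v ∈ S ∧ v ≠ r := ⟨hv, hvr⟩
    simp only [hpardef, dif_pos h]
    exact (hpar v hv hvr).choose_spec
  refine ⟨E, ?_, ?_, ?_⟩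
  · have h1 : E.card ≤ ((Set.toFinite S).toFinset.erase r).card := Finset.card_image_le
    have h2 : ((Set.toFinite S).toFinset.erase r).card = (Set.toFinite S).toFinset.card - 1 :=
      Finset.card_erase_of_mem (by simp [hr])
    have h3 : (Set.toFinite S).toFinset.card = S.ncard :=
      (Set.ncard_eq_toFinset_card S (Set.toFinite S)).symm
    have h4 : 1 ≤ S.ncard := (Set.ncard_pos (Set.toFinite S)).mpr ⟨r, hr⟩
    omega
  · intro e he
    simp only [hE, Finset.mem_image, Finset.mem_erase, Set.Finite.mem_toFinset] at he
    obtain ⟨v, ⟨hvr, hv⟩, rfl⟩ := he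
    obtain ⟨h1, h2, _⟩ := hmem v hv hvr
    exact ⟨h2, h1, hv⟩
  · have key : ∀ m, ∀ v ∈ S, n v ≤ m →
        Relation.ReflTransGen (fun x y => ∃ e ∈ E, e = (x, y) ∨ e = (y, x)) r v := by
      intro m
      induction m with
      | zero =>
          intro v hv hnv
          by_cases hvr : v = r
          · subst hvr; rfl
          · obtain ⟨-, -, hlt⟩ := hmem v hv hvr; omega
      | succ m ih =>
          intro v hv hnv
          by_cases hvr : v = r
          · subst hvr; rfl
          · obtain ⟨h1, h2, hlt⟩ := hmem v hv hvr
            have step : ∃ e ∈ E, e = (par v, v) ∨ e = (v, par v) := by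
              refine ⟨(par v, v), ?_, Or.inl rfl⟩
              simp only [hE, Finset.mem_image, Finset.mem_erase, Set.Finite.mem_toFinset]
              exact ⟨v, ⟨hvr, hv⟩, rfl⟩
            exact Relation.ReflTransGen.tail (ih (par v) h1 (by omega)) step
    have hsymm : Symmetric (fun x y => ∃ e ∈ E, e = (x, y) ∨ e = (y, x)) := by
      intro x y ⟨e, he, h⟩
      exact ⟨e, he, h.symm⟩
    intro a ha b hb
    have h1 := key (n a) a ha le_rfl
    have h2 := key (n b) b hb le_rfl
    exact Relation.ReflTransGen.trans ((@Relation.ReflTransGen.stdSymm _ _ ⟨fun _ _ h => hsymm h⟩).symm _ _ h1) h2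

lemma ncard_finsetBiUnion_le {α W : Type} [Finite W] (E : Finset α) (f : α → Set W) :
    (⋃ e ∈ E, f e).ncard ≤ ∑ e ∈ E, (f e).ncard := by
  classical
  induction E using Finset.induction with
  | empty => simp
  | @insert a s hne ih =>
      rw [Finset.sum_insert hne]
      have : (⋃ e ∈ insert a s, f e) = f a ∪ ⋃ e ∈ s, f e := by
        simp [Set.biUnion_insert]
      rw [this]
      exact le_trans (Set.ncard_union_le _ _) (by omega)

lemma ncard_le_one_of_subsingleton {α : Type} {s : Set α} (h : s.Subsingleton) :
    s.ncard ≤ 1 := by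
  rcases h.eq_empty_or_singleton with rfl | ⟨a, rfl⟩ <;> simp

lemma greedy_indep {α : Type} [Finite α] (C : α → α → Prop) (hsym : Symmetric C) (D : ℕ) :
    ∀ (t : ℕ) (A : Set α), (D + 1) * t + 1 ≤ A.ncard →
    (∀ a ∈ A, {b | b ∈ A ∧ b ≠ a ∧ C a b}.ncard ≤ D) →
    ∃ T : Finset α, ↑T ⊆ A ∧ T.card = t + 1 ∧ ∀ a ∈ T, ∀ b ∈ T, a ≠ b → ¬ C a b := by
  classical
  intro t
  induction t with
  | zero =>
      intro A hA _
      have hne : A.Nonempty := by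
        rw [← Set.ncard_pos (Set.toFinite A)]; omega
      obtain ⟨a, ha⟩ := hne
      exact ⟨{a}, by simpa using ha, by simp, by simp⟩
  | succ t ih =>
      intro A hA hdeg
      have hne : A.Nonempty := by
        rw [← Set.ncard_pos (Set.toFinite A)]; omega
      obtain ⟨a, ha⟩ := hne
      set N : Set α := insert a {b | b ∈ A ∧ b ≠ a ∧ C a b} with hN
      set A' : Set α := A \ N with hA'
      have hcardN : N.ncard ≤ D + 1 := by
        rw [hN]
        have h1 := Set.ncard_insert_le a {b | b ∈ A ∧ b ≠ a ∧ C a b}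
        have h2 := hdeg a ha
        omega
      have hcardA' : (D + 1) * t + 1 ≤ A'.ncard := by
        rw [hA']
        have h1 := Set.ncard_le_ncard_diff_add_ncard A N (Set.toFinite N)
        have h2 : (D + 1) * (t + 1) + 1 ≤ A.ncard := hA
        have h3 : (D + 1) * (t + 1) = (D + 1) * t + D + 1 := by ring
        omega
      have hdeg' : ∀ b ∈ A', {c | c ∈ A' ∧ c ≠ b ∧ C b c}.ncard ≤ D := by
        intro b hb
        refine le_trans (Set.ncard_le_ncard ?_ (Set.toFinite _)) (hdeg b hb.1)
        intro c hc
        exact ⟨hc.1.1, hc.2⟩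
      obtain ⟨T', hT'sub, hT'card, hT'ind⟩ := ih A' hcardA' hdeg'
      have haT' : a ∉ T' := by
        intro h
        have := hT'sub h
        rw [hA'] at this
        exact this.2 (by simp [hN])
      refine ⟨insert a T', ?_, ?_, ?_⟩
      · intro z hz
        simp only [Finset.coe_insert, Set.mem_insert_iff] at hz
        rcases hz with rfl | hz
        · exact ha
        · exact (hT'sub hz).1
      · rw [Finset.card_insert_of_notMem haT', hT'card]
      · intro u hu v hv huv
        simp only [Finset.mem_insert] at hu hv
        have hnb : ∀ z ∈ T', ¬ C a z := by
          intro z hz hCz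
          have hzA' := hT'sub hz
          refine hzA'.2 ?_
          rw [hN]
          right
          exact ⟨hzA'.1, fun h => hzA'.2 (h ▸ Set.mem_insert a _), hCz⟩
        rcases hu with rfl | hu
        · rcases hv with rfl | hv
          · exact absurd rfl huv
          · exact hnb v hv
        · rcases hv with rfl | hv
          · exact fun h => hnb u hu (hsym h)
          · exact hT'ind u hu v hv huv

end Helpers

theorem stmt14 {V : Type} [Finite V] (s t k d q : ℕ)
    (hs : 1 ≤ s) (ht : 1 ≤ t) (hk : 1 ≤ k) (hd : 1 ≤ d) (hq : 1 ≤ q)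
    (G : SimpleGraph V) (P : Set (Σ u : V, Σ v : V, G.Walk u v))
    (hP : IsKDStarShortcutSystem G P k d)
    (hmodel : HasPQModel (shortcutGraph G P) 1 q s
      ((2 * d * (k - 1) * (s + q - 1) + 1) * (t - 1) + 1 + s * d)) :
    HasPQModel G 1 (q + (k - 1) * (s + q - 1)) s t := by
  classical
  set K := k - 1 with hKdef
  set Q1 := s + q - 1 with hQ1def
  set D := 2 * d * K * Q1 with hDdef
  set N := (2 * d * K * Q1 + 1) * (t - 1) + 1 + s * d with hNdef
  set H := shortcutGraph G P with hHdef
  obtain ⟨X, Y, hX, hY, hXX, hYY, hXY, hadjXY⟩ := hmodel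
  -- each X i is a singleton
  have hxex : ∀ i, ∃ a, X i = {a} := by
    intro i
    obtain ⟨⟨a, ha⟩⟩ := (hX i).1.nonempty
    refine ⟨a, Set.eq_singleton_iff_unique_mem.mpr ⟨ha, ?_⟩⟩
    intro b hb
    by_contra hne
    have h2 : ({b, a} : Set V) ⊆ X i := by
      intro z hz
      rcases hz with rfl | hz
      · exact hb
      · simp only [Set.mem_singleton_iff] at hz; subst hz; exact ha
    have h3 := Set.ncard_le_ncard h2 (Set.toFinite _)
    rw [Set.ncard_pair hne] at h3
    have := (hX i).2
    omega
  choose x hx using hxex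
  -- adjacency choices
  have hadj' : ∀ i j, ∃ b, b ∈ Y j ∧ H.Adj (x i) b := by
    intro i j
    obtain ⟨a, haX, b, hbY, hab⟩ := hadjXY i j
    rw [hx i, Set.mem_singleton_iff] at haX
    subst haX
    exact ⟨b, hbY, hab⟩
  choose bfun hbY hbadj using hadj'
  -- expanded walks
  have hexp : ∀ (a b : V) (h : H.Adj a b), ∃ w : G.Walk a b, w.IsPath ∧
      (∀ v, InternalVertex w v → a ∈ Mset G P v ∧ b ∈ Mset G P v) ∧
      {v | InternalVertex w v}.ncard ≤ k - 1 := fun a b h => expand_edge hP h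
  choose W hWpath hWM hWcard using hexp
  -- each Y j nonempty
  have hYne : ∀ j, (Y j).Nonempty := by
    intro j
    obtain ⟨⟨y, hy⟩⟩ := (hY j).1.nonempty
    exact ⟨y, hy⟩
  -- spanning structures
  have hspan : ∀ j, ∃ E : Finset (V × V), E.card + 1 ≤ (Y j).ncard ∧
      (∀ e ∈ E, H.Adj e.1 e.2 ∧ e.1 ∈ Y j ∧ e.2 ∈ Y j) ∧
      (∀ a ∈ Y j, ∀ b ∈ Y j,
        Relation.ReflTransGen (fun u v => ∃ e ∈ E, e = (u, v) ∨ e = (v, u)) a b) :=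
    fun j => span_exists (hYne j)
      (fun a ha b hb => linked_of_induce_connected (hY j).1 ha hb)
  choose E hEcard hEadj hEreach using hspan
  -- added vertex sets
  set Z1 : Fin N → Set V := fun j =>
    ⋃ e ∈ E j, {v | ∃ h : H.Adj e.1 e.2, InternalVertex (W e.1 e.2 h) v} with hZ1def
  set Z2 : Fin N → Set V := fun j =>
    ⋃ i : Fin s, {v | InternalVertex (W (x i) (bfun i j) (hbadj i j)) v} with hZ2def
  set Y' : Fin N → Set V := fun j => Y j ∪ (Z1 j ∪ Z2 j) with hY'def
  -- sizes of added sets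
  have hZ1card : ∀ j, (Z1 j).ncard ≤ (q - 1) * K := by
    intro j
    refine le_trans (ncard_finsetBiUnion_le (E j) _) ?_
    have hb : ∀ e ∈ E j,
        ({v | ∃ h : H.Adj e.1 e.2, InternalVertex (W e.1 e.2 h) v}).ncard ≤ K := by
      intro e he
      have h := (hEadj j e he).1
      have heq : {v | ∃ h' : H.Adj e.1 e.2, InternalVertex (W e.1 e.2 h') v}
          = {v | InternalVertex (W e.1 e.2 h) v} := by
        ext v
        exact ⟨fun ⟨h', hv⟩ => hv, fun hv => ⟨h, hv⟩⟩
      rw [heq]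
      exact hWcard e.1 e.2 h
    refine le_trans (Finset.sum_le_card_nsmul (E j) _ K hb) ?_
    simp only [smul_eq_mul]
    have h1 := hEcard j
    have h2 := (hY j).2
    exact Nat.mul_le_mul_right K (by omega)
  have hZ2card : ∀ j, (Z2 j).ncard ≤ s * K := by
    intro j
    have heq : Z2 j = ⋃ i ∈ (Finset.univ : Finset (Fin s)),
        {v | InternalVertex (W (x i) (bfun i j) (hbadj i j)) v} := by
      rw [hZ2def]; simp
    rw [heq]
    refine le_trans (ncard_finsetBiUnion_le _ _) ?_
    refine le_trans (Finset.sum_le_card_nsmul _ _ K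
      (fun i _ => hWcard (x i) (bfun i j) (hbadj i j))) ?_
    simp [smul_eq_mul]
  have hZcard : ∀ j, (Z1 j ∪ Z2 j).ncard ≤ K * Q1 := by
    intro j
    have h1 := Set.ncard_union_le (Z1 j) (Z2 j)
    have h2 := hZ1card j
    have h3 := hZ2card j
    have h4 : (q - 1) * K + s * K = K * Q1 := by
      rw [hQ1def]
      have : s + q - 1 = (q - 1) + s := by omega
      rw [this, Nat.mul_add, Nat.mul_comm K (q-1), Nat.mul_comm K s]
    omega
  -- added vertices point into M-sets
  have hZM : ∀ j v, v ∈ Z1 j ∪ Z2 j → (Mset G P v ∩ Y j).Nonempty := by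
    intro j v hv
    rcases hv with hv | hv
    · rw [hZ1def] at hv
      simp only [Set.mem_iUnion, Set.mem_setOf_eq] at hv
      obtain ⟨e, he, h, hint⟩ := hv
      exact ⟨e.1, (hWM e.1 e.2 h v hint).1, (hEadj j e he).2.1⟩
    · rw [hZ2def] at hv
      simp only [Set.mem_iUnion, Set.mem_setOf_eq] at hv
      obtain ⟨i, hint⟩ := hv
      exact ⟨bfun i j, (hWM _ _ _ v hint).2, hbY i j⟩
  -- counting: few j's can have M_v meeting Y j
  have hC1 : ∀ v : V, {j : Fin N | (Mset G P v ∩ Y j).Nonempty}.ncard ≤ d := by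
    intro v
    have hch : ∀ j : Fin N, j ∈ {j : Fin N | (Mset G P v ∩ Y j).Nonempty} →
        ∃ u, u ∈ Mset G P v ∩ Y j := fun j hj => hj
    choose f hf using hch
    set g : Fin N → V := fun j =>
      if hj : j ∈ {j : Fin N | (Mset G P v ∩ Y j).Nonempty} then f j hj else v with hg
    have h1 : {j : Fin N | (Mset G P v ∩ Y j).Nonempty}.ncard ≤ (Mset G P v).ncard := by
      refine Set.ncard_le_ncard_of_injOn g ?_ ?_ (Set.toFinite _)
      · intro j hj
        rw [hg]; simp only [dif_pos hj]
        exact (hf j hj).1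
      · intro j1 hj1 j2 hj2 heq
        rw [hg] at heq
        simp only [dif_pos hj1, dif_pos hj2] at heq
        by_contra hne
        have hu1 := (hf j1 hj1).2
        have hu2 := (hf j2 hj2).2
        rw [heq] at hu1
        exact Set.disjoint_left.mp (hYY j1 j2 hne) (heq ▸ (hf j1 hj1).2) hu2
    exact le_trans h1 (hP.2 v)
  -- bad indices
  have hBadcard : {j : Fin N | ∃ i, x i ∈ Y' j}.ncard ≤ s * d := by
    have hsub : {j : Fin N | ∃ i, x i ∈ Y' j} ⊆
        ⋃ i ∈ (Finset.univ : Finset (Fin s)),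
          {j : Fin N | (Mset G P (x i) ∩ Y j).Nonempty} := by
      rintro j ⟨i, hi⟩
      have hxY : x i ∉ Y j := by
        intro h
        exact Set.disjoint_left.mp (hXY i j) (by rw [hx i]; rfl) h
      have hZ : x i ∈ Z1 j ∪ Z2 j := by
        rw [hY'def] at hi
        rcases hi with h | h
        · exact absurd h hxY
        · exact h
      exact Set.mem_iUnion₂.mpr ⟨i, Finset.mem_univ i, hZM j (x i) hZ⟩
    refine le_trans (Set.ncard_le_ncard hsub (Set.toFinite _)) ?_
    refine le_trans (ncard_finsetBiUnion_le _ _) ?_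
    refine le_trans (Finset.sum_le_card_nsmul _ _ d (fun i _ => hC1 (x i))) ?_
    simp [smul_eq_mul]
  -- degree of the conflict relation
  have hdeg : ∀ j : Fin N, {j' : Fin N | j' ≠ j ∧ (Y' j ∩ Y' j').Nonempty}.ncard ≤ D := by
    intro j
    by_cases hk1 : k = 1
    · have hZempty : ∀ j', Z1 j' ∪ Z2 j' = ∅ := by
        intro j'
        rw [Set.eq_empty_iff_forall_notMem]
        intro v hv
        rcases hv with hv | hv
        · rw [hZ1def] at hv
          simp only [Set.mem_iUnion, Set.mem_setOf_eq] at hv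
          obtain ⟨e, he, h, hint⟩ := hv
          have := hWcard e.1 e.2 h
          rw [hk1] at this
          simp only [Nat.sub_self, Nat.le_zero] at this
          have hempty := (Set.ncard_eq_zero (Set.toFinite _)).mp this
          exact absurd hint (by rw [Set.eq_empty_iff_forall_notMem] at hempty; exact hempty v)
        · rw [hZ2def] at hv
          simp only [Set.mem_iUnion, Set.mem_setOf_eq] at hv
          obtain ⟨i, hint⟩ := hv
          have := hWcard (x i) (bfun i j') (hbadj i j')
          rw [hk1] at this
          simp only [Nat.sub_self, Nat.le_zero] at this
          have hempty := (Set.ncard_eq_zero (Set.toFinite _)).mp this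
          exact absurd hint (by rw [Set.eq_empty_iff_forall_notMem] at hempty; exact hempty v)
      have hempty : {j' : Fin N | j' ≠ j ∧ (Y' j ∩ Y' j').Nonempty} = ∅ := by
        rw [Set.eq_empty_iff_forall_notMem]
        rintro j' ⟨hne, v, hv1, hv2⟩
        rw [hY'def] at hv1 hv2
        simp only [hZempty, Set.union_empty] at hv1 hv2
        exact Set.disjoint_left.mp (hYY j j' (Ne.symm hne)) hv1 hv2
      rw [hempty]
      simp
    · have hk2 : 2 ≤ k := by omega
      set ZF := (Set.toFinite (Z1 j ∪ Z2 j)).toFinset with hZF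
      set YF := (Set.toFinite (Y j)).toFinset with hYF
      have hsub : {j' : Fin N | j' ≠ j ∧ (Y' j ∩ Y' j').Nonempty} ⊆
          (⋃ v ∈ ZF, {j' : Fin N | j' ≠ j ∧ (v ∈ Y j' ∨ v ∈ Z1 j' ∪ Z2 j')}) ∪
          (⋃ v ∈ YF, {j' : Fin N | v ∈ Z1 j' ∪ Z2 j'}) := by
        rintro j' ⟨hne, v, hv1, hv2⟩
        rw [hY'def] at hv1 hv2
        rcases hv1 with hv1 | hv1
        · -- v ∈ Y j
          rcases hv2 with hv2 | hv2
          · exact absurd hv2 (Set.disjoint_left.mp (hYY j j' (Ne.symm hne)) hv1)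
          · right
            exact Set.mem_iUnion₂.mpr ⟨v, by rw [hYF]; simpa using hv1, hv2⟩
        · -- v ∈ Z1 j ∪ Z2 j
          left
          refine Set.mem_iUnion₂.mpr ⟨v, by rw [hZF]; simpa using hv1, hne, ?_⟩
          rcases hv2 with hv2 | hv2
          · exact Or.inl hv2
          · exact Or.inr hv2
      refine le_trans (Set.ncard_le_ncard hsub (Set.toFinite _)) ?_
      refine le_trans (Set.ncard_union_le _ _) ?_
      have hA : (⋃ v ∈ ZF, {j' : Fin N | j' ≠ j ∧ (v ∈ Y j' ∨ v ∈ Z1 j' ∪ Z2 j')}).ncard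
          ≤ K * Q1 * d := by
        refine le_trans (ncard_finsetBiUnion_le _ _) ?_
        have hbound : ∀ v ∈ ZF,
            ({j' : Fin N | j' ≠ j ∧ (v ∈ Y j' ∨ v ∈ Z1 j' ∪ Z2 j')}).ncard ≤ d := by
          intro v hv
          have hvZ : v ∈ Z1 j ∪ Z2 j := by rw [hZF] at hv; simpa using hv
          have hsub2 : {j' : Fin N | j' ≠ j ∧ (v ∈ Y j' ∨ v ∈ Z1 j' ∪ Z2 j')} ⊆
              {j' : Fin N | v ∈ Y j'} ∪
              ({j' : Fin N | (Mset G P v ∩ Y j').Nonempty} \ {j}) := by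
            rintro j' ⟨hne, h | h⟩
            · exact Or.inl h
            · exact Or.inr ⟨hZM j' v h, hne⟩
          refine le_trans (Set.ncard_le_ncard hsub2 (Set.toFinite _)) ?_
          refine le_trans (Set.ncard_union_le _ _) ?_
          have h1 : ({j' : Fin N | v ∈ Y j'}).ncard ≤ 1 := by
            apply ncard_le_one_of_subsingleton
            intro j1 hj1 j2 hj2
            by_contra hne12
            exact Set.disjoint_left.mp (hYY j1 j2 hne12) hj1 hj2
          have h2 : ({j' : Fin N | (Mset G P v ∩ Y j').Nonempty} \ {j}).ncard ≤ d - 1 := by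
            have hjmem : j ∈ {j' : Fin N | (Mset G P v ∩ Y j').Nonempty} := hZM j v hvZ
            rw [Set.ncard_diff_singleton_of_mem hjmem]
            have := hC1 v
            omega
          omega
        refine le_trans (Finset.sum_le_card_nsmul _ _ d hbound) ?_
        simp only [smul_eq_mul]
        have hZFcard : ZF.card ≤ K * Q1 := by
          rw [hZF, ← Set.ncard_eq_toFinset_card (Z1 j ∪ Z2 j) (Set.toFinite _)]
          exact hZcard j
        exact Nat.mul_le_mul_right d hZFcard
      have hB : (⋃ v ∈ YF, {j' : Fin N | v ∈ Z1 j' ∪ Z2 j'}).ncard ≤ q * d := by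
        refine le_trans (ncard_finsetBiUnion_le _ _) ?_
        have hbound : ∀ v ∈ YF, ({j' : Fin N | v ∈ Z1 j' ∪ Z2 j'}).ncard ≤ d := by
          intro v _
          have hsub2 : {j' : Fin N | v ∈ Z1 j' ∪ Z2 j'} ⊆
              {j' : Fin N | (Mset G P v ∩ Y j').Nonempty} :=
            fun j' h => hZM j' v h
          exact le_trans (Set.ncard_le_ncard hsub2 (Set.toFinite _)) (hC1 v)
        refine le_trans (Finset.sum_le_card_nsmul _ _ d hbound) ?_
        simp only [smul_eq_mul]
        have hYFcard : YF.card ≤ q := by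
          rw [hYF, ← Set.ncard_eq_toFinset_card (Y j) (Set.toFinite _)]
          exact (hY j).2
        exact Nat.mul_le_mul_right d hYFcard
      have hqle : q ≤ K * Q1 := by
        have h1 : q ≤ Q1 := by rw [hQ1def]; omega
        have h2 : 1 ≤ K := by rw [hKdef]; omega
        calc q ≤ Q1 := h1
          _ = 1 * Q1 := (Nat.one_mul Q1).symm
          _ ≤ K * Q1 := Nat.mul_le_mul_right Q1 h2
      have hDeq : D = K * Q1 * d + K * Q1 * d := by
        rw [hDdef]; ring
      have : q * d ≤ K * Q1 * d := Nat.mul_le_mul_right d hqle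
      omega
  -- good indices
  set Bad := {j : Fin N | ∃ i, x i ∈ Y' j} with hBadDef
  set Good := (Set.univ : Set (Fin N)) \ Bad with hGoodDef
  have hGoodcard : (D + 1) * (t - 1) + 1 ≤ Good.ncard := by
    have h1 := Set.le_ncard_diff Bad (Set.univ : Set (Fin N)) (Set.toFinite _)
    have h2 : (Set.univ : Set (Fin N)).ncard = N := by
      rw [Set.ncard_univ]; simp
    have h3 : N = (D + 1) * (t - 1) + 1 + s * d := by rw [hNdef, hDdef]
    have h4 := hBadcard
    rw [hGoodDef]
    omega
  have hdeg' : ∀ a ∈ Good, {b | b ∈ Good ∧ b ≠ a ∧ (Y' a ∩ Y' b).Nonempty}.ncard ≤ D := by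
    intro a _
    refine le_trans (Set.ncard_le_ncard ?_ (Set.toFinite _)) (hdeg a)
    intro b hb
    exact ⟨hb.2.1, hb.2.2⟩
  obtain ⟨T, hTsub, hTcard, hTind⟩ :=
    greedy_indep (fun a b => (Y' a ∩ Y' b).Nonempty)
      (fun a b h => ⟨h.choose, h.choose_spec.2, h.choose_spec.1⟩) D (t - 1) Good hGoodcard hdeg'
  have hTcard' : T.card = t := by omega
  set ε := T.equivFinOfCardEq hTcard' with hε
  -- goodness facts
  have hgood : ∀ j ∈ T, ∀ i, x i ∉ Y' j := by
    intro j hj i hxi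
    exact (hTsub hj).2 ⟨i, hxi⟩
  -- support facts for expanded walks
  have hsupp1 : ∀ (j : Fin N) (e : V × V) (he : e ∈ E j) (h : H.Adj e.1 e.2),
      ∀ z ∈ (W e.1 e.2 h).support, z ∈ Y' j := by
    intro j e he h z hz
    by_cases hz1 : z = e.1
    · subst hz1; exact Or.inl (hEadj j e he).2.1
    by_cases hz2 : z = e.2
    · subst hz2; exact Or.inl (hEadj j e he).2.2
    · right; left
      rw [hZ1def]
      exact Set.mem_iUnion₂.mpr ⟨e, he, h, hz, hz1, hz2⟩
  have hsupp2 : ∀ (j : Fin N) (i : Fin s),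
      ∀ z ∈ (W (x i) (bfun i j) (hbadj i j)).support, z = x i ∨ z ∈ Y' j := by
    intro j i z hz
    by_cases hz1 : z = x i
    · exact Or.inl hz1
    right
    by_cases hz2 : z = bfun i j
    · subst hz2; exact Or.inl (hbY i j)
    · right; right
      rw [hZ2def]
      exact Set.mem_iUnion.mpr ⟨i, hz, hz1, hz2⟩
  -- walks within Y' connecting vertices of Y
  have hwalkY : ∀ (j : Fin N), ∀ a ∈ Y j, ∀ b ∈ Y j,
      ∃ w : G.Walk a b, ∀ z ∈ w.support, z ∈ Y' j := by
    intro j a ha b hb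
    have hrel := hEreach j a ha b hb
    clear hb
    induction hrel with
    | refl =>
        refine ⟨Walk.nil, ?_⟩
        intro z hz
        simp only [Walk.support_nil, List.mem_singleton] at hz
        subst hz
        exact Or.inl ha
    | tail hab hbc ih =>
        obtain ⟨w1, hw1⟩ := ih
        obtain ⟨⟨e1, e2⟩, he, heq | heq⟩ := hbc
        · have h1 : e1 = _ := congrArg Prod.fst heq
          have h2 : e2 = _ := congrArg Prod.snd heq
          subst h1; subst h2
          have h := (hEadj j (e1, e2) he).1
          refine ⟨w1.append (W e1 e2 h), ?_⟩
          intro z hz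
          rw [Walk.mem_support_append_iff] at hz
          rcases hz with hz | hz
          · exact hw1 z hz
          · exact hsupp1 j (e1, e2) he h z hz
        · have h1 : e1 = _ := congrArg Prod.fst heq
          have h2 : e2 = _ := congrArg Prod.snd heq
          subst h1; subst h2
          have h := (hEadj j (e1, e2) he).1
          refine ⟨w1.append (W e1 e2 h).reverse, ?_⟩
          intro z hz
          rw [Walk.mem_support_append_iff] at hz
          rcases hz with hz | hz
          · exact hw1 z hz
          · rw [Walk.support_reverse, List.mem_reverse] at hz
            exact hsupp1 j (e1, e2) he h z hz
  -- connectivity of Y' j for good j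
  have hconn : ∀ j : Fin N, (∀ i, x i ∉ Y' j) → (G.induce (Y' j)).Connected := by
    intro j hgoodj
    obtain ⟨r, hr⟩ := hYne j
    have key : ∀ v ∈ Y' j, ∃ w : G.Walk v r, ∀ z ∈ w.support, z ∈ Y' j := by
      intro v hv
      rcases hv with hv | hv | hv
      · exact hwalkY j v hv r hr
      · -- v internal on a spanning-edge walk
        rw [hZ1def] at hv
        simp only [Set.mem_iUnion, Set.mem_setOf_eq] at hv
        obtain ⟨e, he, h, hint⟩ := hv
        have hvsup : v ∈ (W e.1 e.2 h).support := hint.1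
        obtain ⟨w2, hw2⟩ := hwalkY j e.2 (hEadj j e he).2.2 r hr
        refine ⟨((W e.1 e.2 h).dropUntil v hvsup).append w2, ?_⟩
        intro z hz
        rw [Walk.mem_support_append_iff] at hz
        rcases hz with hz | hz
        · exact hsupp1 j e he h z (Walk.support_dropUntil_subset _ hvsup hz)
        · exact hw2 z hz
      · -- v internal on a walk from x i
        rw [hZ2def] at hv
        simp only [Set.mem_iUnion, Set.mem_setOf_eq] at hv
        obtain ⟨i, hint⟩ := hv
        set w0 := W (x i) (bfun i j) (hbadj i j) with hw0
        have hpath := hWpath (x i) (bfun i j) (hbadj i j)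
        have hvsup : v ∈ w0.support := hint.1
        have hvne : v ≠ x i := hint.2.1
        have hxnot : x i ∉ (w0.dropUntil v hvsup).support := by
          have hspec := w0.take_spec hvsup
          have hsupeq : (w0.takeUntil v hvsup).support
              ++ (w0.dropUntil v hvsup).support.tail = w0.support := by
            rw [← Walk.support_append, hspec]
          have hnodup : w0.support.Nodup := hpath.support_nodup
          rw [← hsupeq] at hnodup
          have hdisj := List.disjoint_of_nodup_append hnodup
          intro hmem
          rw [Walk.support_eq_cons, List.mem_cons] at hmem
          rcases hmem with hmem | hmem
          · exact hvne hmem.symm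
          · exact hdisj (Walk.start_mem_support _) hmem
        obtain ⟨w2, hw2⟩ := hwalkY j (bfun i j) (hbY i j) r hr
        refine ⟨(w0.dropUntil v hvsup).append w2, ?_⟩
        intro z hz
        rw [Walk.mem_support_append_iff] at hz
        rcases hz with hz | hz
        · have hzsup : z ∈ w0.support := Walk.support_dropUntil_subset _ hvsup hz
          rcases hsupp2 j i z hzsup with hz1 | hz1
          · exact absurd (hz1 ▸ hz) hxnot
          · exact hz1
        · exact hw2 z hz
    apply induce_connected_of_linked ⟨r, Or.inl hr⟩
    intro a ha b hb
    obtain ⟨w1, h1⟩ := key a ha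
    obtain ⟨w2, h2⟩ := key b hb
    refine ⟨w1.append w2.reverse, ?_⟩
    intro z hz
    rw [Walk.mem_support_append_iff] at hz
    rcases hz with hz | hz
    · exact h1 z hz
    · rw [Walk.support_reverse, List.mem_reverse] at hz
      exact h2 z hz
  -- size of Y' j
  have hY'card : ∀ j, (Y' j).ncard ≤ q + K * Q1 := by
    intro j
    have h1 := Set.ncard_union_le (Y j) (Z1 j ∪ Z2 j)
    have h2 := (hY j).2
    have h3 := hZcard j
    have : Y' j = Y j ∪ (Z1 j ∪ Z2 j) := by rw [hY'def]
    rw [this]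
    omega
  -- adjacency of x i to Y' j
  have hadjfin : ∀ (i : Fin s) (j : Fin N), ∃ c ∈ Y' j, G.Adj (x i) c := by
    intro i j
    have h := hbadj i j
    obtain ⟨c, hadjc, w', hw'⟩ :=
      Walk.exists_eq_cons_of_ne h.ne (W (x i) (bfun i j) h)
    refine ⟨c, ?_, hadjc⟩
    have hcsup : c ∈ (W (x i) (bfun i j) h).support := by rw [hw']; simp
    have hW_eq : W (x i) (bfun i j) h = W (x i) (bfun i j) (hbadj i j) := rfl
    rcases hsupp2 j i c (hW_eq ▸ hcsup) with hc | hc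
    · exact absurd hc.symm hadjc.ne
    · exact hc
  -- assemble the model
  refine ⟨X, fun m => Y' ↑(ε.symm m), ?_, ?_, hXX, ?_, ?_, ?_⟩
  · intro i
    refine ⟨?_, (hX i).2⟩
    rw [hx i]
    exact induce_singleton_connected (x i)
  · intro m
    have hjT : (↑(ε.symm m) : Fin N) ∈ T := (ε.symm m).2
    refine ⟨hconn _ (hgood _ hjT), hY'card _⟩
  · intro m m' hmm
    have hne : (↑(ε.symm m) : Fin N) ≠ ↑(ε.symm m') := by
      intro h
      exact hmm (by
        have : ε.symm m = ε.symm m' := Subtype.ext h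
        have := congrArg ε this
        simpa using this)
    have hnc := hTind _ (ε.symm m).2 _ (ε.symm m').2 hne
    rw [Set.not_nonempty_iff_eq_empty] at hnc
    exact Set.disjoint_iff_inter_eq_empty.mpr hnc
  · intro i m
    rw [hx i, Set.disjoint_singleton_left]
    exact hgood _ (ε.symm m).2 i
  · intro i m
    obtain ⟨c, hc, hadjc⟩ := hadjfin i (↑(ε.symm m))
    exact ⟨x i, by rw [hx i]; rfl, c, hc, hadjc⟩
end
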